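/- arXiv:0711.4625 — 5 statements merged into one kernel-verified Lean document; each statement's English description precedes it below -/
import Mathlib

section
/- For every real number μ > 0, the Taylor coefficients a_n(μ) of F_μ(q) = ∏_{n=2}^∞ (1−q^n)^{−μ} do not satisfy the polynomial growth condition: there is no real α and constant C > 0 such that a_n(μ) ≤ C·n^α for all n ≥ 1. In other words, the coefficients of 1/∏_{n≥2}(1−q^n)^μ grow faster than any polynomial in n. -/
open Filter Metric

/-- Complexified version: `Gc μ z = exp(-μ * Σ log(1 - z^(n+2)))`. -/
noncomputable def Gc (μ : ℝ) (z : ℂ) : ℂ :=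
  Complex.exp ((-μ : ℂ) * ∑' n : ℕ, Complex.log (1 - z ^ (n + 2)))

lemma aux_norm_pow_lt {z : ℂ} (hz : ‖z‖ < 1) (n : ℕ) : ‖z ^ (n + 2)‖ < 1 := by
  rw [norm_pow]
  exact pow_lt_one₀ (norm_nonneg z) hz (by omega)

lemma aux_slit {z : ℂ} (hz : ‖z‖ < 1) (n : ℕ) : 1 - z ^ (n + 2) ∈ Complex.slitPlane := by
  left
  have h1 : (1 - z ^ (n + 2)).re = 1 - (z ^ (n + 2)).re := by simp
  have h2 : (z ^ (n + 2)).re ≤ ‖z ^ (n + 2)‖ := Complex.re_le_norm _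
  have := aux_norm_pow_lt hz n
  rw [h1]; linarith

lemma aux_log_bound {r : ℝ} (hr0 : 0 ≤ r) (hr1 : r < 1) (n : ℕ) {z : ℂ} (hz : ‖z‖ ≤ r) :
    ‖Complex.log (1 - z ^ (n + 2))‖ ≤ ((1 - r ^ 2)⁻¹ / 2 + 1) * (r ^ 2 * r ^ n) := by
  have hzr : ‖z‖ < 1 := lt_of_le_of_lt hz hr1
  have hw : ‖-z ^ (n + 2)‖ = ‖z‖ ^ (n + 2) := by rw [norm_neg, norm_pow]
  have hwr : ‖z‖ ^ (n + 2) ≤ r ^ (n + 2) := pow_le_pow_left₀ (norm_nonneg z) hz _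
  have hrn : r ^ (n + 2) ≤ r ^ 2 := pow_le_pow_of_le_one hr0 hr1.le (by omega)
  have hw1 : ‖-z ^ (n + 2)‖ < 1 := by
    rw [hw]; exact pow_lt_one₀ (norm_nonneg z) hzr (by omega)
  have key := Complex.norm_log_one_add_le hw1
  have h1p : (1 : ℂ) + -z ^ (n + 2) = 1 - z ^ (n + 2) := by ring
  rw [h1p] at key
  have hr2 : r ^ 2 < 1 := pow_lt_one₀ hr0 hr1 (by omega)
  have hinv : (1 - ‖-z ^ (n + 2)‖)⁻¹ ≤ (1 - r ^ 2)⁻¹ := by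
    apply inv_anti₀ (by linarith) (by rw [hw]; linarith [hwr.trans hrn])
  have hwle : ‖-z ^ (n + 2)‖ ≤ r ^ 2 * r ^ n := by
    rw [hw]
    calc ‖z‖ ^ (n + 2) ≤ r ^ (n + 2) := hwr
    _ = r ^ 2 * r ^ n := by ring
  have hsq : ‖-z ^ (n + 2)‖ ^ 2 ≤ ‖-z ^ (n + 2)‖ := by
    nlinarith [norm_nonneg (-z ^ (n + 2))]
  calc ‖Complex.log (1 - z ^ (n + 2))‖
      ≤ ‖-z ^ (n + 2)‖ ^ 2 * (1 - ‖-z ^ (n + 2)‖)⁻¹ / 2 + ‖-z ^ (n + 2)‖ := key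
    _ ≤ ‖-z ^ (n + 2)‖ * (1 - r ^ 2)⁻¹ / 2 + ‖-z ^ (n + 2)‖ := by
        have hn0 : (0:ℝ) ≤ ‖-z ^ (n + 2)‖ := norm_nonneg _
        have hi0 : (0:ℝ) ≤ (1 - ‖-z ^ (n + 2)‖)⁻¹ := by
          apply inv_nonneg.2; rw [hw]; nlinarith [hwr.trans hrn]
        nlinarith [mul_le_mul hsq hinv hi0 hn0]
    _ ≤ ((1 - r ^ 2)⁻¹ / 2 + 1) * (r ^ 2 * r ^ n) := by
        have hi : (0:ℝ) ≤ (1 - r ^ 2)⁻¹ := inv_nonneg.2 (by linarith)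
        nlinarith [hwle, norm_nonneg (-z ^ (n + 2))]

lemma aux_diff_sum : DifferentiableOn ℂ
    (fun z : ℂ => ∑' n : ℕ, Complex.log (1 - z ^ (n + 2))) (ball (0:ℂ) 1) := by
  intro z hz
  rw [mem_ball_zero_iff] at hz
  set r : ℝ := (‖z‖ + 1) / 2 with hrdef
  have hr0 : 0 ≤ r := by positivity
  have hr1 : r < 1 := by rw [hrdef]; linarith
  have hzr : ‖z‖ < r := by rw [hrdef]; linarith [norm_nonneg z]
  have hu : Summable (fun n : ℕ => ((1 - r ^ 2)⁻¹ / 2 + 1) * (r ^ 2 * r ^ n)) := by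
    apply Summable.mul_left
    exact (summable_geometric_of_lt_one hr0 hr1).mul_left _
  have hF : TendstoUniformlyOn
      (fun (t : Finset ℕ) (x : ℂ) => ∑ n ∈ t, Complex.log (1 - x ^ (n + 2)))
      (fun x : ℂ => ∑' n : ℕ, Complex.log (1 - x ^ (n + 2))) atTop (ball (0:ℂ) r) := by
    apply tendstoUniformlyOn_tsum hu
    intro n x hx
    exact aux_log_bound hr0 hr1 n (le_of_lt (mem_ball_zero_iff.mp hx))
  have key : DifferentiableOn ℂ
      (fun z : ℂ => ∑' n : ℕ, Complex.log (1 - z ^ (n + 2))) (ball (0:ℂ) r) := by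
    apply hF.tendstoLocallyUniformlyOn.differentiableOn ?_ isOpen_ball
    filter_upwards with t
    apply DifferentiableOn.fun_sum
    intro n _
    intro x hx
    have hx1 : ‖x‖ < 1 := lt_of_lt_of_le (mem_ball_zero_iff.mp hx) hr1.le
    exact (((differentiableAt_const (1:ℂ)).sub
      (differentiableAt_pow (n+2))).clog (aux_slit hx1 n)).differentiableWithinAt
  exact (key.differentiableAt (isOpen_ball.mem_nhds (mem_ball_zero_iff.mpr hzr))).differentiableWithinAt

lemma aux_diff_Gc (μ : ℝ) : DifferentiableOn ℂ (Gc μ) (ball (0:ℂ) 1) := by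
  intro z hz
  exact (((aux_diff_sum z hz).const_mul _).cexp)

/-- `Fmu μ q = ∏_{n=2}^∞ (1 - q^n)^{-μ}`, real powers via `rpow`. -/
noncomputable def Fmu (μ : ℝ) (q : ℝ) : ℝ := ∏' n : ℕ, (1 - q ^ (n + 2)) ^ (-μ)

/-- The `n`-th Taylor coefficient of `f` at `0`. -/
noncomputable def taylorCoeff (f : ℝ → ℝ) (n : ℕ) : ℝ := iteratedDeriv n f 0 / n.factorial

lemma aux_pos {q : ℝ} (hq : |q| < 1) (n : ℕ) : 0 < 1 - q ^ (n + 2) := by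
  have h : |q ^ (n + 2)| < 1 := by
    rw [abs_pow]; exact pow_lt_one₀ (abs_nonneg q) hq (by omega)
  have := (abs_lt.mp h).2
  linarith

lemma aux_summable_log {q : ℝ} (hq : |q| < 1) :
    Summable (fun n : ℕ => Real.log (1 - q ^ (n + 2))) := by
  apply Summable.of_abs
  apply Summable.of_nonneg_of_le (fun n => abs_nonneg _)
    (f := fun n => (q ^ 2 / (1 - q ^ 2)) * |q| ^ n)
  · intro n
    have hx : |q ^ (n + 2)| < 1 := by
      rw [abs_pow]; exact pow_lt_one₀ (abs_nonneg q) hq (by omega)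
    have key := Real.abs_log_sub_add_sum_range_le hx 0
    simp only [Finset.range_zero, Finset.sum_empty, zero_add, pow_one] at key
    have hq2 : q ^ 2 < 1 := by
      have := abs_lt.mp hq; nlinarith
    have habs : |q ^ (n + 2)| ≤ q ^ 2 * |q| ^ n := by
      rw [abs_pow]
      have : |q| ^ (n + 2) = |q| ^ 2 * |q| ^ n := by ring
      rw [this, sq_abs]
    have hden : 1 - q ^ 2 ≤ 1 - |q ^ (n + 2)| := by
      have : |q ^ (n+2)| ≤ q ^ 2 := by
        calc |q ^ (n+2)| ≤ q ^ 2 * |q| ^ n := habs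
        _ ≤ q ^ 2 * 1 := by
            apply mul_le_mul_of_nonneg_left _ (sq_nonneg q)
            exact pow_le_one₀ (abs_nonneg q) hq.le
        _ = q ^ 2 := mul_one _
      linarith
    calc |Real.log (1 - q ^ (n + 2))| ≤ |q ^ (n+2)| / (1 - |q ^ (n+2)|) := key
      _ ≤ (q ^ 2 * |q| ^ n) / (1 - q ^ 2) := by
          apply div_le_div₀ (by positivity) habs (by linarith) hden
      _ = (q ^ 2 / (1 - q ^ 2)) * |q| ^ n := by ring
  · exact (summable_geometric_of_lt_one (abs_nonneg q) hq).mul_left _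

lemma aux_Fmu_eq_exp (μ : ℝ) {q : ℝ} (hq : |q| < 1) :
    Fmu μ q = Real.exp ((-μ) * ∑' n : ℕ, Real.log (1 - q ^ (n + 2))) := by
  have hs : HasSum (fun n : ℕ => (-μ) * Real.log (1 - q ^ (n + 2)))
      ((-μ) * ∑' n : ℕ, Real.log (1 - q ^ (n + 2))) :=
    (aux_summable_log hq).hasSum.mul_left _
  have hp := hs.rexp
  have hfun : (fun n : ℕ => Real.exp ((-μ) * Real.log (1 - q ^ (n + 2))))
      = fun n : ℕ => (1 - q ^ (n + 2)) ^ (-μ) := by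
    funext n
    rw [Real.rpow_def_of_pos (aux_pos hq n), mul_comm]
  simp only [Function.comp_def] at hp
  rw [hfun] at hp
  rw [Fmu]
  exact hp.tprod_eq

lemma aux_Gc_eq (μ : ℝ) {q : ℝ} (hq : |q| < 1) :
    Gc μ (q : ℂ) = ((Fmu μ q : ℝ) : ℂ) := by
  have hlog : ∀ n : ℕ, Complex.log (1 - (q:ℂ) ^ (n + 2))
      = ((Real.log (1 - q ^ (n + 2)) : ℝ) : ℂ) := by
    intro n
    rw [Complex.ofReal_log (aux_pos hq n).le]
    push_cast
    ring_nf
  rw [Gc]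
  have : (∑' n : ℕ, Complex.log (1 - (q:ℂ) ^ (n + 2)))
      = ((∑' n : ℕ, Real.log (1 - q ^ (n + 2)) : ℝ) : ℂ) := by
    rw [Complex.ofReal_tsum]
    exact tsum_congr hlog
  rw [this, aux_Fmu_eq_exp μ hq, Complex.ofReal_exp]
  congr 1
  push_cast
  ring

lemma aux_analytic_iter (μ : ℝ) (n : ℕ) :
    AnalyticOnNhd ℂ (iteratedDeriv n (Gc μ)) (ball (0:ℂ) 1) := by
  induction n with
  | zero => simpa [iteratedDeriv_zero] using (aux_diff_Gc μ).analyticOnNhd isOpen_ball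
  | succ n ih => rw [iteratedDeriv_succ]; exact ih.deriv

lemma aux_mem_ball {q : ℝ} (hq : |q| < 1) : ((q:ℂ) ∈ ball (0:ℂ) 1) := by
  rw [mem_ball_zero_iff, Complex.norm_real, Real.norm_eq_abs]
  exact hq

lemma aux_iteratedDeriv (μ : ℝ) (n : ℕ) :
    ∀ q : ℝ, |q| < 1 → iteratedDeriv n (Fmu μ) q = (iteratedDeriv n (Gc μ) (q:ℂ)).re := by
  induction n with
  | zero =>
    intro q hq
    simp only [iteratedDeriv_zero]
    rw [aux_Gc_eq μ hq, Complex.ofReal_re]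
  | succ n ih =>
    intro q hq
    rw [iteratedDeriv_succ, iteratedDeriv_succ]
    have hev : (iteratedDeriv n (Fmu μ)) =ᶠ[nhds q]
        (fun x : ℝ => (iteratedDeriv n (Gc μ) (x:ℂ)).re) := by
      have hmem : ball (0:ℝ) 1 ∈ nhds q := isOpen_ball.mem_nhds (by
        rw [mem_ball_zero_iff, Real.norm_eq_abs]; exact hq)
      filter_upwards [hmem] with x hx
      exact ih x (by rwa [mem_ball_zero_iff, Real.norm_eq_abs] at hx)
    rw [hev.deriv_eq]
    have hd : HasDerivAt (iteratedDeriv n (Gc μ))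
        (deriv (iteratedDeriv n (Gc μ)) (q:ℂ)) (q:ℂ) :=
      ((aux_analytic_iter μ n (q:ℂ) (aux_mem_ball hq)).differentiableAt).hasDerivAt
    rw [← iteratedDeriv_succ] at hd
    have := (hd.real_of_complex).deriv
    rw [← iteratedDeriv_succ]
    exact this

lemma aux_hasSum (μ : ℝ) {q : ℝ} (hq : |q| < 1) :
    HasSum (fun n : ℕ => taylorCoeff (Fmu μ) n * q ^ n) (Fmu μ q) := by
  have h := Complex.hasSum_taylorSeries_on_ball (aux_diff_Gc μ) (aux_mem_ball hq)
  have h2 := h.mapL Complex.reCLM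
  have h3 : ∀ n : ℕ, Complex.reCLM ((n.factorial : ℂ)⁻¹ • ((q:ℂ) - 0) ^ n •
      iteratedDeriv n (Gc μ) 0)
      = taylorCoeff (Fmu μ) n * q ^ n := by
    intro n
    have h0 : ((0:ℝ):ℂ) = (0:ℂ) := by norm_num
    have hit : iteratedDeriv n (Fmu μ) 0 = (iteratedDeriv n (Gc μ) 0).re := by
      have := aux_iteratedDeriv μ n 0 (by norm_num)
      rwa [h0] at this
    simp only [Complex.reCLM_apply, smul_eq_mul, sub_zero]
    rw [taylorCoeff, hit]
    have : ((n.factorial : ℂ))⁻¹ * ((q:ℂ) ^ n * iteratedDeriv n (Gc μ) 0)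
        = (((n.factorial : ℝ))⁻¹ * q ^ n : ℝ) * iteratedDeriv n (Gc μ) 0 := by
      push_cast; ring
    rw [this, Complex.re_ofReal_mul]
    field_simp
  have h4 : Complex.reCLM (Gc μ (q:ℂ)) = Fmu μ q := by
    rw [aux_Gc_eq μ hq]; simp
  rw [h4] at h2
  exact h2.congr_fun (fun n => (h3 n).symm)

set_option maxHeartbeats 2000000 in
/-- The Taylor coefficients of `F_μ(q) = ∏_{n≥2} (1-q^n)^{-μ}` at `0` grow faster than
any polynomial in `n`: there is no `C > 0` and real `α` with `a_n(μ) ≤ C·n^α` for all `n ≥ 1`. -/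
theorem coeffs_of_Fmu_not_polynomial_growth (μ : ℝ) (hμ : 0 < μ) :
    ¬ ∃ C : ℝ, 0 < C ∧ ∃ α : ℝ, ∀ n : ℕ, 1 ≤ n →
      taylorCoeff (Fmu μ) n ≤ C * (n : ℝ) ^ α := by
  rintro ⟨C, hC, α, hbound⟩
  set a : ℕ → ℝ := taylorCoeff (Fmu μ) with ha
  set k : ℕ := ⌈α⌉₊ with hk
  have hαk : α ≤ (k : ℝ) := Nat.le_ceil α
  set c : ℝ := μ * Real.log 2 with hc
  have hc0 : 0 < c := mul_pos hμ (Real.log_pos one_lt_two)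
  set D : ℝ := |a 0| + C * ((2 * (k+1) : ℝ)) ^ (2*k+1) with hD
  have main : ∀ m : ℕ, Real.exp (c * (m + 1)) ≤ D * ((m : ℝ) + 2) ^ (2*k+1) := by
    intro m
    have hk0 : (0:ℝ) ≤ (k:ℝ) := Nat.cast_nonneg k
    have hm0 : (0:ℝ) ≤ (m:ℝ) := Nat.cast_nonneg m
    have hk1 : (1:ℝ) ≤ (k:ℝ) + 1 := by linarith
    have hm2 : (2:ℝ) ≤ (m:ℝ) + 2 := by linarith
    set N : ℝ := 2 * ((k:ℝ)+1) * ((m:ℝ)+2) with hN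
    have hNpos : (0:ℝ) < N := by rw [hN]; positivity
    have hN4 : (4:ℝ) ≤ N := by rw [hN]; nlinarith
    set ε : ℝ := N⁻¹ with hε
    have hεpos : 0 < ε := by rw [hε]; positivity
    have hεle : ε ≤ 1/4 := by
      rw [hε, inv_le_comm₀ (by positivity) (by norm_num)]
      linarith
    set r : ℝ := 1 - ε with hr
    have hr0 : 0 < r := by rw [hr]; linarith
    have hr1 : r < 1 := by rw [hr]; linarith
    set q : ℝ := r ^ (k+1) with hqdef
    have hq0 : 0 < q := pow_pos hr0 _
    have hq1 : q < 1 := pow_lt_one₀ hr0.le hr1 (by omega)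
    have hqabs : |q| < 1 := by rw [abs_of_pos hq0]; exact hq1
    -- upper bound
    have hS := aux_hasSum μ hqabs
    have hsummable := hS.summable
    have htail_summable : Summable (fun n : ℕ => a (n+1) * q ^ (n+1)) := by
      exact (summable_nat_add_iff 1).2 hsummable
    have hsplit : Fmu μ q = a 0 + ∑' n : ℕ, a (n+1) * q ^ (n+1) := by
      rw [← hS.tsum_eq, hsummable.tsum_eq_zero_add]
      simp
      rfl
    have hεinv : ε⁻¹ = N := by rw [hε, inv_inv]
    -- termwise bound
    have hterm : ∀ n : ℕ, a (n+1) * q ^ (n+1) ≤ (C * ε⁻¹ ^ (2*k)) * r ^ (n+1) := by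
      intro n
      have hn1 : (1:ℝ) ≤ ((n:ℝ) + 1) := by
        have : (0:ℝ) ≤ (n:ℝ) := Nat.cast_nonneg n
        linarith
      have h1 : a (n+1) ≤ C * ((n:ℝ)+1) ^ (k:ℕ) := by
        have hb := hbound (n+1) (by omega)
        have h2 : (((n+1 : ℕ)):ℝ) ^ α ≤ (((n+1:ℕ)):ℝ) ^ (k:ℝ) := by
          apply Real.rpow_le_rpow_of_exponent_le (by exact_mod_cast hn1) hαk
        rw [Real.rpow_natCast] at h2
        have := hb.trans (by
          apply mul_le_mul_of_nonneg_left h2 hC.le)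
        push_cast at this ⊢
        linarith
      have hq0n : (0:ℝ) ≤ q ^ (n+1) := by positivity
      have step1 : a (n+1) * q ^ (n+1) ≤ C * ((n:ℝ)+1) ^ k * q ^ (n+1) :=
        mul_le_mul_of_nonneg_right h1 hq0n
      -- now bound ((n+1)^k q^(n+1))
      have hqpow : q ^ (n+1) = (r ^ (n+1)) ^ k * r ^ (n+1) := by
        rw [hqdef, ← pow_mul, ← pow_mul, ← pow_add]
        ring_nf
      have hgeo := hasSum_coe_mul_geometric_of_norm_lt_one
        (r := r) (by rw [Real.norm_eq_abs, abs_of_pos hr0]; exact hr1)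
      have hle : ((n+1 : ℕ):ℝ) * r ^ (n+1) ≤ r / (1-r) ^ 2 :=
        le_hasSum hgeo (n+1) (fun i _ => by positivity)
      have h1r : (1 : ℝ) - r = ε := by rw [hr]; ring
      have hle2 : ((n:ℝ)+1) * r ^ (n+1) ≤ ε⁻¹ ^ 2 := by
        have : r / (1-r)^2 ≤ 1 / ε ^ 2 := by
          rw [h1r]
          apply div_le_div₀ (by positivity) hr1.le (by positivity) le_rfl
        calc ((n:ℝ)+1) * r ^ (n+1) = ((n+1 : ℕ):ℝ) * r ^ (n+1) := by push_cast; ring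
          _ ≤ r / (1-r)^2 := hle
          _ ≤ 1 / ε ^ 2 := this
          _ = ε⁻¹ ^ 2 := by rw [one_div, ← inv_pow]
      have hcomb : ((n:ℝ)+1) ^ k * q ^ (n+1) ≤ ε⁻¹ ^ (2*k) * r ^ (n+1) := by
        rw [hqpow, ← mul_assoc, ← mul_pow]
        apply mul_le_mul_of_nonneg_right _ (by positivity)
        calc (((n:ℝ)+1) * r ^ (n+1)) ^ k ≤ (ε⁻¹ ^ 2) ^ k := by
              apply pow_le_pow_left₀ (by positivity) hle2
          _ = ε⁻¹ ^ (2*k) := by rw [← pow_mul]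
      calc a (n+1) * q ^ (n+1) ≤ C * (((n:ℝ)+1) ^ k * q ^ (n+1)) := by
            rw [← mul_assoc]; exact step1
        _ ≤ C * (ε⁻¹ ^ (2*k) * r ^ (n+1)) := mul_le_mul_of_nonneg_left hcomb hC.le
        _ = (C * ε⁻¹ ^ (2*k)) * r ^ (n+1) := by ring
    have hgeosum : Summable (fun n : ℕ => (C * ε⁻¹ ^ (2*k)) * r ^ (n+1)) := by
      apply Summable.mul_left
      exact (summable_geometric_of_lt_one hr0.le hr1).comp_injective (add_left_injective 1)
    have htail : (∑' n : ℕ, a (n+1) * q ^ (n+1)) ≤ C * ε⁻¹ ^ (2*k+1) := by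
      have h1 := Summable.tsum_le_tsum hterm htail_summable hgeosum
      have h2 : (∑' n : ℕ, (C * ε⁻¹ ^ (2*k)) * r ^ (n+1))
          = (C * ε⁻¹ ^ (2*k)) * (r * (1-r)⁻¹) := by
        rw [tsum_mul_left]
        congr 1
        have : (fun n : ℕ => r ^ (n+1)) = fun n : ℕ => r * r ^ n := by
          funext n; ring
        rw [this, tsum_mul_left, tsum_geometric_of_lt_one hr0.le hr1]
      have h1r : (1 : ℝ) - r = ε := by rw [hr]; ring
      have h3 : r * (1-r)⁻¹ ≤ ε⁻¹ := by
        rw [h1r]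
        calc r * ε⁻¹ ≤ 1 * ε⁻¹ := by
              apply mul_le_mul_of_nonneg_right hr1.le (by positivity)
          _ = ε⁻¹ := one_mul _
      calc (∑' n : ℕ, a (n+1) * q ^ (n+1)) ≤ (C * ε⁻¹ ^ (2*k)) * (r * (1-r)⁻¹) := by
            rw [← h2]; exact h1
        _ ≤ (C * ε⁻¹ ^ (2*k)) * ε⁻¹ := by
            apply mul_le_mul_of_nonneg_left h3 (by positivity)
        _ = C * ε⁻¹ ^ (2*k+1) := by ring
    have hupper : Fmu μ q ≤ D * ((m : ℝ) + 2) ^ (2*k+1) := by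
      have hεN : ε⁻¹ ^ (2*k+1) = (2*((k:ℝ)+1)) ^ (2*k+1) * ((m:ℝ)+2) ^ (2*k+1) := by
        rw [hεinv, hN, mul_pow]
      have hpow1 : (1:ℝ) ≤ ((m:ℝ)+2) ^ (2*k+1) := one_le_pow₀ (by linarith)
      have ha0 : a 0 ≤ |a 0| * ((m:ℝ)+2) ^ (2*k+1) := by
        calc a 0 ≤ |a 0| := le_abs_self _
          _ = |a 0| * 1 := (mul_one _).symm
          _ ≤ |a 0| * ((m:ℝ)+2) ^ (2*k+1) := by
              apply mul_le_mul_of_nonneg_left hpow1 (abs_nonneg _)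
      calc Fmu μ q = a 0 + ∑' n : ℕ, a (n+1) * q ^ (n+1) := hsplit
        _ ≤ |a 0| * ((m:ℝ)+2) ^ (2*k+1) + C * ε⁻¹ ^ (2*k+1) := add_le_add ha0 htail
        _ = |a 0| * ((m:ℝ)+2) ^ (2*k+1)
            + C * ((2*((k:ℝ)+1)) ^ (2*k+1) * ((m:ℝ)+2) ^ (2*k+1)) := by rw [hεN]
        _ = D * ((m : ℝ) + 2) ^ (2*k+1) := by rw [hD]; ring
    -- lower bound
    have hlower : Real.exp (c * (m + 1)) ≤ Fmu μ q := by
      rw [aux_Fmu_eq_exp μ hqabs]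
      apply Real.exp_le_exp.2
      have hsumm := aux_summable_log hqabs
      have hterm2 : ∀ n ∈ Finset.range (m+1), Real.log 2 ≤ -Real.log (1 - q ^ (n+2)) := by
        intro n hn
        have hnm : n ≤ m := by
          simpa [Nat.lt_succ_iff] using Finset.mem_range.mp hn
        have hhalf : 1 - q ^ (n+2) ≤ 1/2 := by
          have hq2 : q ^ (n+2) = r ^ ((k+1)*(n+2)) := by
            rw [hqdef, ← pow_mul]
          have hbern : 1 + (((k+1)*(n+2) : ℕ):ℝ) * (-ε) ≤ (1 + (-ε)) ^ ((k+1)*(n+2)) := by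
            apply one_add_mul_le_pow (by linarith)
          have h1e : (1:ℝ) + (-ε) = r := by rw [hr]; ring
          rw [h1e] at hbern
          have hcount : (((k+1)*(n+2) : ℕ):ℝ) * ε ≤ 1/2 := by
            have hle : (((k+1)*(n+2) : ℕ):ℝ) ≤ ((k:ℝ)+1) * ((m:ℝ)+2) := by
              push_cast
              have : (n:ℝ) ≤ (m:ℝ) := by exact_mod_cast hnm
              nlinarith
            have hhalfval : ((k:ℝ)+1) * ((m:ℝ)+2) * ε = 1/2 := by
              rw [hε, hN]
              field_simp
            calc (((k+1)*(n+2) : ℕ):ℝ) * ε ≤ ((k:ℝ)+1) * ((m:ℝ)+2) * ε := by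
                  apply mul_le_mul_of_nonneg_right hle hεpos.le
              _ = 1/2 := hhalfval
          have : 1 - (((k+1)*(n+2) : ℕ):ℝ) * ε ≤ q ^ (n+2) := by
            rw [hq2]
            calc 1 - (((k+1)*(n+2) : ℕ):ℝ) * ε
                = 1 + (((k+1)*(n+2) : ℕ):ℝ) * (-ε) := by ring
              _ ≤ r ^ ((k+1)*(n+2)) := hbern
          linarith
        have hpos2 : 0 < 1 - q ^ (n+2) := aux_pos hqabs n
        have hlog := Real.log_le_log hpos2 hhalf
        rw [show (1:ℝ)/2 = 2⁻¹ by norm_num, Real.log_inv] at hlog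
        linarith
      have hnonneg : ∀ n : ℕ, 0 ≤ -Real.log (1 - q ^ (n+2)) := by
        intro n
        have hpos2 : 0 < 1 - q ^ (n+2) := aux_pos hqabs n
        have hle1 : 1 - q ^ (n+2) ≤ 1 := by
          have : (0:ℝ) ≤ q ^ (n+2) := by positivity
          linarith
        have := Real.log_nonpos hpos2.le hle1
        linarith
      have hsum_ge : ((m:ℝ)+1) * Real.log 2 ≤ ∑' n : ℕ, -Real.log (1 - q ^ (n+2)) := by
        have h1 : ((m:ℝ)+1) * Real.log 2
            = ∑ n ∈ Finset.range (m+1), Real.log 2 := by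
          rw [Finset.sum_const, Finset.card_range]
          push_cast; ring
        rw [h1]
        calc ∑ n ∈ Finset.range (m+1), Real.log 2
            ≤ ∑ n ∈ Finset.range (m+1), -Real.log (1 - q ^ (n+2)) :=
              Finset.sum_le_sum hterm2
          _ ≤ ∑' n : ℕ, -Real.log (1 - q ^ (n+2)) :=
              Summable.sum_le_tsum _ (fun n _ => hnonneg n) hsumm.neg
      have htsneg : (∑' n : ℕ, -Real.log (1 - q ^ (n+2)))
          = -∑' n : ℕ, Real.log (1 - q ^ (n+2)) := tsum_neg
      rw [htsneg] at hsum_ge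
      calc c * ((m:ℝ) + 1) = μ * (((m:ℝ)+1) * Real.log 2) := by rw [hc]; ring
        _ ≤ μ * (-∑' n : ℕ, Real.log (1 - q ^ (n+2))) :=
            mul_le_mul_of_nonneg_left hsum_ge hμ.le
        _ = -μ * ∑' n : ℕ, Real.log (1 - q ^ (n+2)) := by ring
    exact hlower.trans hupper
  -- contradiction via growth of exp
  have htend : Tendsto (fun x : ℝ => Real.exp (c*x) / x ^ ((2*k+1 : ℕ):ℝ)) atTop atTop :=
    tendsto_exp_mul_div_rpow_atTop _ c hc0
  have hcomp : Tendsto (fun m : ℕ => ((m:ℝ) + 2)) atTop atTop :=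
    tendsto_atTop_add_const_right _ 2 tendsto_natCast_atTop_atTop
  have htend2 := htend.comp hcomp
  obtain ⟨m, hm⟩ := (htend2.eventually_gt_atTop (D * Real.exp c)).exists
  have hx : (0:ℝ) < (m:ℝ) + 2 := by positivity
  have hrp : ((m:ℝ)+2) ^ ((2*k+1 : ℕ):ℝ) = ((m:ℝ)+2) ^ (2*k+1) :=
    Real.rpow_natCast _ _
  simp only [Function.comp] at hm
  rw [hrp] at hm
  have hppos : (0:ℝ) < ((m:ℝ)+2) ^ (2*k+1) := by positivity
  have hgt : D * Real.exp c * ((m:ℝ)+2) ^ (2*k+1) < Real.exp (c * ((m:ℝ)+2)) := by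
    rw [lt_div_iff₀ hppos] at hm
    linarith
  have hEeq : Real.exp (c * ((m:ℝ)+2)) = Real.exp (c * ((m:ℝ)+1)) * Real.exp c := by
    rw [← Real.exp_add]; ring_nf
  have hmain := main m
  nlinarith [mul_le_mul_of_nonneg_right hmain (Real.exp_pos c).le, Real.exp_pos c,
    Real.exp_pos (c * ((m:ℝ)+1)), hppos]
end

section
/- For every real number α, the sequence n ↦ (number of partitions of n all of whose parts are at least 2) is not O(n^α); that is, the Taylor coefficients of 1/∏_{n≥2}(1−q^n) grow faster than any polynomial in n. -/
/-- The number of partitions of `n` all of whose parts are at least `2`. -/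
noncomputable def partitionsMinTwo (n : ℕ) : ℕ :=
  Nat.card {p : n.Partition // ∀ i ∈ p.parts, 2 ≤ i}

open Finset

lemma two_pow_le_partitionsMinTwo (k : ℕ) (hk : 3 ≤ k) :
    2 ^ (k - 1) ≤ partitionsMinTwo (k * (k + 1)) := by
  classical
  obtain ⟨n, hn⟩ : ∃ n, k * (k + 1) = n := ⟨_, rfl⟩
  rw [hn]
  have hnkk : n = k * k + k := by rw [← hn]; ring
  have hsum : ∀ S : Finset ℕ, S ⊆ Icc 2 k → S.sum id ≤ k * k - k := by
    intro S hS
    calc S.sum id ≤ (Icc 2 k).sum id := Finset.sum_le_sum_of_subset hS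
    _ ≤ (Icc 2 k).card • k := Finset.sum_le_card_nsmul _ _ _
        (by intro x hx; exact (Finset.mem_Icc.mp hx).2)
    _ = (k - 1) * k := by rw [Nat.card_Icc]; simp [smul_eq_mul]
    _ = k * k - k := by rw [Nat.sub_mul, one_mul]
  have key : ∀ S : Finset ℕ, S ⊆ Icc 2 k → ∃ p : n.Partition,
      (∀ i ∈ p.parts, 2 ≤ i) ∧ p.parts = (n - S.sum id) ::ₘ S.val := by
    intro S hS
    have h1 : S.sum id ≤ k * k - k := hsum S hS
    have hkk : k ≤ k * k := Nat.le_mul_of_pos_left k (by omega)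
    refine ⟨⟨(n - S.sum id) ::ₘ S.val, ?_, ?_⟩, ?_, rfl⟩
    · intro i hi
      rcases Multiset.mem_cons.mp hi with h | h
      · omega
      · have := (Finset.mem_Icc.mp (hS h)).1; omega
    · have hSsum : S.val.sum = S.sum id := by
        rw [← Finset.sum_map_val, Multiset.map_id]
      rw [Multiset.sum_cons, hSsum]
      omega
    · intro i hi
      rcases Multiset.mem_cons.mp hi with h | h
      · omega
      · exact (Finset.mem_Icc.mp (hS h)).1
  choose f hf2 hfparts using key
  have hinj : Function.Injective
      (fun S : ((Icc 2 k).powerset : Finset (Finset ℕ)) =>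
        (⟨f S.1 (Finset.mem_powerset.mp S.2), hf2 S.1 _⟩ :
          {p : n.Partition // ∀ i ∈ p.parts, 2 ≤ i})) := by
    rintro ⟨S, hS⟩ ⟨T, hT⟩ h
    simp only [Subtype.mk.injEq] at h ⊢
    have hS' := Finset.mem_powerset.mp hS
    have hT' := Finset.mem_powerset.mp hT
    have hparts : (n - S.sum id) ::ₘ S.val = (n - T.sum id) ::ₘ T.val := by
      rw [← hfparts S hS', ← hfparts T hT', h]
    rcases Multiset.cons_eq_cons.mp hparts with ⟨-, h2⟩ | ⟨-, cs, h1, -⟩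
    · exact Finset.val_injective h2
    · exfalso
      have hmem : (n - T.sum id) ∈ S.val := by
        rw [h1]; exact Multiset.mem_cons_self _ _
      have hle := (Finset.mem_Icc.mp (hS' hmem)).2
      have h3 := hsum T hT'
      have hkk : k ≤ k * k := Nat.le_mul_of_pos_left k (by omega)
      omega
  have hcard := Fintype.card_le_of_injective _ hinj
  have h1 : Fintype.card ((Icc 2 k).powerset : Finset (Finset ℕ)) = 2 ^ (k - 1) := by
    have he : k + 1 - 2 = k - 1 := by omega
    rw [Fintype.card_coe, Finset.card_powerset, Nat.card_Icc, he]
  have h2 : partitionsMinTwo n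
      = Fintype.card {p : n.Partition // ∀ i ∈ p.parts, 2 ≤ i} := by
    rw [partitionsMinTwo, Nat.card_eq_fintype_card]
  omega

/-- The number of partitions of `n` with all parts at least `2` (the `n`-th Taylor
coefficient of `1/∏_{n≥2}(1-q^n)`) is not `O(n^α)` for any real `α`. -/
theorem partitionsMinTwo_not_bigO (α : ℝ) :
    ¬ ∃ C : ℝ, 0 < C ∧ ∀ n : ℕ, 1 ≤ n → (partitionsMinTwo n : ℝ) ≤ C * (n : ℝ) ^ α := by
  rintro ⟨C, hC, hbound⟩
  set m := ⌈α⌉₊ with hm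
  set C' := C * 2 ^ m with hC'
  have hC'pos : 0 < C' := by positivity
  have hmain : ∀ k : ℕ, 3 ≤ k → (2:ℝ) ^ (k-1) ≤ C' * (k:ℝ) ^ (2*m) := by
    intro k hk
    have h1 := two_pow_le_partitionsMinTwo k hk
    have hn1 : 1 ≤ k * (k+1) := by
      have : 1 * 1 ≤ k * (k+1) := Nat.mul_le_mul (by omega) (by omega)
      omega
    have h2 := hbound (k*(k+1)) hn1
    have hcast : (2:ℝ)^(k-1) ≤ (partitionsMinTwo (k*(k+1)) : ℝ) := by
      exact_mod_cast h1
    have hx1 : (1:ℝ) ≤ ((k*(k+1) : ℕ) : ℝ) := by exact_mod_cast hn1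
    have hrp : ((k*(k+1):ℕ):ℝ) ^ α ≤ ((k*(k+1):ℕ):ℝ) ^ (m:ℝ) :=
      Real.rpow_le_rpow_of_exponent_le hx1 (Nat.le_ceil α)
    rw [Real.rpow_natCast] at hrp
    have hle2 : ((k*(k+1):ℕ):ℝ) ^ m ≤ ((2:ℝ) * (k:ℝ)^2) ^ m := by
      apply pow_le_pow_left₀ (by positivity)
      push_cast
      have hk' : (3:ℝ) ≤ (k:ℝ) := by exact_mod_cast hk
      nlinarith [sq_nonneg ((k:ℝ) - 1), hk']
    have heq : ((2:ℝ) * (k:ℝ)^2) ^ m = 2^m * (k:ℝ)^(2*m) := by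
      rw [mul_pow, ← pow_mul, mul_comm 2 m]
    calc (2:ℝ)^(k-1) ≤ (partitionsMinTwo (k*(k+1)) : ℝ) := hcast
    _ ≤ C * ((k*(k+1):ℕ):ℝ) ^ α := by push_cast at h2 ⊢; exact h2
    _ ≤ C * ((k*(k+1):ℕ):ℝ) ^ m := by
        apply mul_le_mul_of_nonneg_left hrp hC.le
    _ ≤ C * ((2:ℝ) * (k:ℝ)^2) ^ m := mul_le_mul_of_nonneg_left hle2 hC.le
    _ = C' * (k:ℝ)^(2*m) := by rw [heq, hC']; ring
  -- exponential beats polynomial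
  have htend := tendsto_pow_const_div_const_pow_of_one_lt (2*m) (by norm_num : (1:ℝ) < 2)
  have hpos : (0:ℝ) < 1 / (2 * C') := by positivity
  obtain ⟨k, hlt, hk3⟩ :=
    ((htend.eventually (gt_mem_nhds hpos)).and (Filter.eventually_ge_atTop 3)).exists
  have h2k : (0:ℝ) < 2 ^ k := by positivity
  have hlt' : (k:ℝ)^(2*m) < 2^k / (2 * C') := by
    rw [lt_div_iff₀ (by positivity)]
    rw [div_lt_iff₀ h2k] at hlt
    calc (k:ℝ)^(2*m) * (2*C') < (1/(2*C') * 2^k) * (2*C') :=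
          mul_lt_mul_of_pos_right hlt (by positivity)
    _ = 2^k := by field_simp
  have hfinal := hmain k hk3
  have hpow : (2:ℝ)^(k-1) = 2^k / 2 := by
    have : k - 1 + 1 = k := by omega
    rw [eq_div_iff (by norm_num : (2:ℝ) ≠ 0), ← pow_succ, this]
  rw [hpow] at hfinal
  have : C' * (k:ℝ)^(2*m) < C' * (2^k / (2*C')) :=
    mul_lt_mul_of_pos_left hlt' hC'pos
  have heq2 : C' * ((2:ℝ)^k / (2*C')) = 2^k / 2 := by
    field_simp
  rw [heq2] at this
  exact absurd (lt_of_le_of_lt hfinal this) (lt_irrefl _)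
end

section
/- Let (a_n)_{n≥0} be a sequence of nonnegative real numbers and (c_n)_{n≥0} a sequence of real numbers satisfying the polynomial growth condition. Suppose that for every q ∈ (0,1) both series Σ_{n≥0} a_n q^n and Σ_{n≥0} c_n q^n converge and Σ_{n≥0} a_n q^n ≤ Σ_{n≥0} c_n q^n. Then (a_n) also satisfies the polynomial growth condition. Equivalently: a power series with nonnegative coefficients growing faster than every polynomial cannot be bounded on (0,1) by a power series whose coefficients satisfy the polynomial growth condition. -/
/-- A sequence of reals satisfies the polynomial growth condition if there are `C > 0`
and `α : ℝ` with `|x n| ≤ C·n^α` for all `n ≥ 1`. -/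
def PolyGrowth (x : ℕ → ℝ) : Prop :=
  ∃ C > (0 : ℝ), ∃ α : ℝ, ∀ n : ℕ, 1 ≤ n → |x n| ≤ C * (n : ℝ) ^ α

lemma pow_le_factorial_mul_choose (n k : ℕ) :
    (n : ℝ) ^ k ≤ (k.factorial : ℝ) * ((n + k).choose k : ℝ) := by
  have h1 : n ^ k ≤ (n + k).descFactorial k := by
    calc n ^ k ≤ (n + 1) ^ k := Nat.pow_le_pow_left (Nat.le_succ n) k
      _ = (n + k + 1 - k) ^ k := by congr 1; omega
      _ ≤ (n + k).descFactorial k := Nat.pow_sub_le_descFactorial (n + k) k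
  have h2 : (n + k).descFactorial k = k.factorial * (n + k).choose k :=
    Nat.descFactorial_eq_factorial_mul_choose (n + k) k
  exact_mod_cast h2 ▸ h1

/-- If `a` is a nonnegative sequence, `c` has polynomial growth, and for every
`q ∈ (0,1)` both power series converge with `∑ a_n q^n ≤ ∑ c_n q^n`, then `a` also
has polynomial growth. -/
theorem polyGrowth_of_powerSeries_le (a c : ℕ → ℝ) (ha0 : ∀ n, 0 ≤ a n)
    (hc : PolyGrowth c)
    (hsa : ∀ q : ℝ, q ∈ Set.Ioo (0 : ℝ) 1 → Summable (fun n => a n * q ^ n))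
    (hsc : ∀ q : ℝ, q ∈ Set.Ioo (0 : ℝ) 1 → Summable (fun n => c n * q ^ n))
    (hle : ∀ q : ℝ, q ∈ Set.Ioo (0 : ℝ) 1 →
      (∑' n : ℕ, a n * q ^ n) ≤ ∑' n : ℕ, c n * q ^ n) :
    PolyGrowth a := by
  obtain ⟨C, hC, α, hcb⟩ := hc
  set k := ⌈α⌉₊ with hk
  set D : ℝ := |c 0| + C * k.factorial with hD
  have hD0 : 0 < D := by positivity
  -- Step 1 : the c-series is bounded by D / (1-q)^(k+1)
  have key : ∀ q : ℝ, q ∈ Set.Ioo (0:ℝ) 1 →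
      (∑' n : ℕ, c n * q ^ n) ≤ D / (1 - q) ^ (k + 1) := by
    intro q hq
    have hq0 : 0 < q := hq.1
    have hq1 : q < 1 := hq.2
    have hqn : ‖q‖ < 1 := by rw [Real.norm_eq_abs, abs_of_pos hq0]; exact hq1
    have hsum := hasSum_choose_mul_geometric_of_norm_lt_one (𝕜 := ℝ) k hqn
    have hterm : ∀ n : ℕ, c n * q ^ n ≤ D * (((n + k).choose k : ℝ) * q ^ n) := by
      intro n
      rcases Nat.eq_zero_or_pos n with h0 | h1
      · subst h0
        simp only [pow_zero, mul_one, Nat.zero_add, Nat.choose_self, Nat.cast_one]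
        have : 0 ≤ C * k.factorial := by positivity
        calc c 0 ≤ |c 0| := le_abs_self _
          _ ≤ D := by rw [hD]; linarith
      · have hn1 : (1 : ℝ) ≤ (n : ℝ) := by exact_mod_cast h1
        have hqpow : (0:ℝ) ≤ q ^ n := pow_nonneg hq0.le n
        have h3 : c n ≤ C * (n : ℝ) ^ α := (le_abs_self _).trans (hcb n h1)
        have h4 : (n : ℝ) ^ α ≤ (n : ℝ) ^ (k : ℝ) :=
          Real.rpow_le_rpow_of_exponent_le hn1 (Nat.le_ceil α)
        have h5 : (n : ℝ) ^ (k : ℝ) = (n : ℝ) ^ k := Real.rpow_natCast _ k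
        have h6 : c n ≤ C * ((k.factorial : ℝ) * ((n + k).choose k : ℝ)) := by
          calc c n ≤ C * (n : ℝ) ^ α := h3
            _ ≤ C * (n : ℝ) ^ k := by
                rw [← h5]; exact mul_le_mul_of_nonneg_left h4 hC.le
            _ ≤ C * ((k.factorial : ℝ) * ((n + k).choose k : ℝ)) :=
                mul_le_mul_of_nonneg_left (pow_le_factorial_mul_choose n k) hC.le
        have h7 : C * (k.factorial : ℝ) ≤ D := by
          rw [hD]; have := abs_nonneg (c 0); linarith
        have h8 : (1 : ℝ) ≤ ((n + k).choose k : ℝ) := by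
          exact_mod_cast Nat.one_le_iff_ne_zero.mpr (Nat.choose_pos (by omega)).ne'
        calc c n * q ^ n ≤ C * ((k.factorial : ℝ) * ((n + k).choose k : ℝ)) * q ^ n :=
              mul_le_mul_of_nonneg_right h6 hqpow
          _ = (C * (k.factorial : ℝ)) * (((n + k).choose k : ℝ) * q ^ n) := by ring
          _ ≤ D * (((n + k).choose k : ℝ) * q ^ n) := by
              apply mul_le_mul_of_nonneg_right h7
              positivity
    calc (∑' n : ℕ, c n * q ^ n)
        ≤ ∑' n : ℕ, D * (((n + k).choose k : ℝ) * q ^ n) :=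
          Summable.tsum_le_tsum hterm (hsc q hq) (hsum.summable.mul_left D)
      _ = D * (1 / (1 - q) ^ (k + 1)) := by rw [tsum_mul_left, hsum.tsum_eq]
      _ = D / (1 - q) ^ (k + 1) := by ring
  -- Step 2 : pointwise bound for m ≥ 2
  have main : ∀ m : ℕ, 2 ≤ m → a m ≤ 8 * D * (m : ℝ) ^ (k + 1) := by
    intro m hm
    have hm1 : (1 : ℝ) < (m : ℝ) := by exact_mod_cast hm.trans_lt' one_lt_two
    have hm0 : (0 : ℝ) < (m : ℝ) := by linarith
    set q : ℝ := 1 - 1 / m with hqdef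
    have hinv : 0 < 1 / (m : ℝ) := by positivity
    have hinv1 : 1 / (m : ℝ) < 1 := by rw [div_lt_one hm0]; exact hm1
    have hm2 : (2 : ℝ) ≤ (m : ℝ) := by exact_mod_cast hm
    have hq : q ∈ Set.Ioo (0 : ℝ) 1 :=
      ⟨by rw [hqdef]; exact sub_pos.2 hinv1, by rw [hqdef]; exact sub_lt_self 1 hinv⟩
    have hq0 : 0 < q := hq.1
    -- single term ≤ tsum
    have h1 : a m * q ^ m ≤ ∑' n : ℕ, a n * q ^ n :=
      Summable.le_tsum (hsa q hq) m (fun n _ => mul_nonneg (ha0 n) (pow_nonneg hq0.le n))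
    have h2 : a m * q ^ m ≤ D * (m : ℝ) ^ (k + 1) := by
      have := (h1.trans (hle q hq)).trans (key q hq)
      have h1q : 1 - q = 1 / m := by rw [hqdef]; ring
      rw [h1q] at this
      calc a m * q ^ m ≤ D / (1 / (m:ℝ)) ^ (k+1) := this
        _ = D * (m : ℝ) ^ (k + 1) := by
            rw [div_pow, one_pow]
            field_simp
    -- lower bound on q^m : (1/q)^m ≤ exp 2 ≤ 8
    have hqm : (1 : ℝ) ≤ 8 * q ^ m := by
      have hm1' : (1 : ℝ) ≤ (m : ℝ) - 1 := by linarith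
      have hm1pos : (0 : ℝ) < (m : ℝ) - 1 := by linarith
      have e1 : 1 / q = 1 + 1 / ((m : ℝ) - 1) := by
        rw [hqdef]
        field_simp
        ring
      have e2 : 1 / q ≤ Real.exp (1 / ((m : ℝ) - 1)) := by
        rw [e1, add_comm]
        exact Real.add_one_le_exp _
      have e3 : (1 / q) ^ m ≤ Real.exp ((m : ℝ) / ((m : ℝ) - 1)) := by
        calc (1 / q) ^ m ≤ (Real.exp (1 / ((m:ℝ) - 1))) ^ m :=
              pow_le_pow_left₀ (by positivity) e2 m
          _ = Real.exp ((m : ℝ) * (1 / ((m:ℝ) - 1))) := by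
              rw [← Real.exp_nat_mul]
          _ = Real.exp ((m : ℝ) / ((m : ℝ) - 1)) := by rw [mul_one_div]
      have e4 : (m : ℝ) / ((m : ℝ) - 1) ≤ 2 := by
        rw [div_le_iff₀ hm1pos]
        have : (2 : ℝ) ≤ (m : ℝ) := by exact_mod_cast hm
        linarith
      have e5 : Real.exp 2 ≤ 8 := by
        have h := Real.exp_one_lt_d9
        calc Real.exp 2 = Real.exp 1 * Real.exp 1 := by
              rw [← Real.exp_add]; norm_num
          _ ≤ 2.7182818286 * 2.7182818286 := by nlinarith [Real.exp_pos 1]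
          _ ≤ 8 := by norm_num
      have e6 : (1 / q) ^ m ≤ 8 := (e3.trans ((Real.exp_le_exp.2 e4).trans e5))
      have hqm0 : (0 : ℝ) < q ^ m := pow_pos hq0 m
      rw [div_pow, one_pow, div_le_iff₀ hqm0] at e6
      linarith
    -- combine
    have hposm : (0 : ℝ) ≤ (m : ℝ) ^ (k + 1) := by positivity
    calc a m = 1 * a m := (one_mul _).symm
      _ ≤ (8 * q ^ m) * a m := mul_le_mul_of_nonneg_right hqm (ha0 m)
      _ = 8 * (a m * q ^ m) := by ring
      _ ≤ 8 * (D * (m : ℝ) ^ (k + 1)) := by linarith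
      _ = 8 * D * (m : ℝ) ^ (k + 1) := by ring
  -- conclude
  refine ⟨8 * D + a 1 + 1, by have := ha0 1; linarith, (k + 1 : ℕ), fun n hn => ?_⟩
  rw [abs_of_nonneg (ha0 n), Real.rpow_natCast]
  rcases eq_or_lt_of_le hn with h1 | h2
  · rw [← h1]
    simp only [Nat.cast_one, one_pow, mul_one]
    linarith
  · have hn2 : 2 ≤ n := h2
    have hnp : (1 : ℝ) ≤ (n : ℝ) ^ (k + 1) :=
      one_le_pow₀ (by exact_mod_cast hn)
    have := main n hn2
    nlinarith [ha0 1, this, hnp]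
end

section
/- For every real number μ > 0, all Taylor coefficients a_n(μ) of F_μ at 0 are nonnegative, and a_0(μ) = 1. -/
namespace FmuAux

open Real Filter

/-- Index map: `(n, k) ↦ (n+2)*(k+1)`. -/
def phi (p : ℕ × ℕ) : ℕ := (p.1 + 2) * (p.2 + 1)

/-- Double family whose sum over `k` gives `-log (1 - q^(n+2))`. -/
noncomputable def u (q : ℝ) (p : ℕ × ℕ) : ℝ := q ^ phi p / (p.2 + 1)

lemma fiber_finite (m : ℕ) : (phi ⁻¹' {m}).Finite := by
  apply Set.Finite.subset ((Set.finite_Iic m).prod (Set.finite_Iic m))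
  rintro ⟨n, k⟩ hp
  simp only [Set.mem_preimage, Set.mem_singleton_iff, phi] at hp
  constructor
  · simp only [Set.mem_Iic]
    calc n ≤ n + 2 := by omega
    _ ≤ (n + 2) * (k + 1) := Nat.le_mul_of_pos_right _ (by omega)
    _ = m := hp
  · simp only [Set.mem_Iic]
    calc k ≤ k + 1 := by omega
    _ ≤ (n + 2) * (k + 1) := Nat.le_mul_of_pos_left _ (by omega)
    _ = m := hp

/-- The coefficients of the log-series. -/
noncomputable def c (m : ℕ) : ℝ := ∑' p : phi ⁻¹' {m}, (1 : ℝ) / ((p : ℕ × ℕ).2 + 1)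

lemma c_nonneg (m : ℕ) : 0 ≤ c m :=
  tsum_nonneg fun p => by positivity

lemma summable_u {q : ℝ} (hq : |q| < 1) : Summable (u q) := by
  have h0 : (0:ℝ) ≤ |q| := abs_nonneg q
  have hmaj : Summable (fun p : ℕ × ℕ => |q| ^ p.1 * |q| ^ p.2) :=
    (summable_geometric_of_lt_one h0 hq).mul_of_nonneg
      (summable_geometric_of_lt_one h0 hq) (fun n => by positivity) (fun n => by positivity)
  apply Summable.of_abs
  apply hmaj.of_nonneg_of_le (fun p => abs_nonneg _)
  rintro ⟨n, k⟩
  have h1 : |u q (n, k)| ≤ |q| ^ phi (n, k) := by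
    rw [u, abs_div]
    rw [abs_pow]
    apply div_le_of_le_mul₀ (by positivity) (by positivity)
    have : (1:ℝ) ≤ |((k:ℝ) + 1)| := by
      rw [abs_of_nonneg (by positivity)]; linarith [Nat.cast_nonneg (α := ℝ) k]
    nlinarith [pow_nonneg h0 (phi (n, k))]
  refine h1.trans ?_
  rw [← pow_add]
  apply pow_le_pow_of_le_one h0 hq.le
  simp only [phi]; nlinarith

lemma hasSum_u_fiber {q : ℝ} (hq : |q| < 1) (n : ℕ) :
    HasSum (fun k => u q (n, k)) (-Real.log (1 - q ^ (n + 2))) := by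
  have hx : |q ^ (n + 2)| < 1 := by
    rw [abs_pow]
    exact pow_lt_one₀ (abs_nonneg q) hq (by omega)
  have h := Real.hasSum_pow_div_log_of_abs_lt_one hx
  have he : (fun k => u q (n, k)) = fun k : ℕ => (q ^ (n + 2)) ^ (k + 1) / (k + 1) := by
    funext k
    simp only [u, phi, pow_mul]
  rw [he]
  exact h

/-- Sum over the whole double family. -/
noncomputable def G (q : ℝ) : ℝ := ∑' p : ℕ × ℕ, u q p

lemma hasSum_log {q : ℝ} (hq : |q| < 1) :
    HasSum (fun n : ℕ => -Real.log (1 - q ^ (n + 2))) (G q) :=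
  (summable_u hq).hasSum.prod_fiberwise (fun n => hasSum_u_fiber hq n)

lemma hasSum_coeff {q : ℝ} (hq : |q| < 1) :
    HasSum (fun m => c m * q ^ m) (G q) := by
  have h := (summable_u hq).hasSum.tsum_fiberwise phi
  have he : (fun m => c m * q ^ m) = fun m => ∑' p : phi ⁻¹' {m}, u q p := by
    funext m
    have : ∀ p : phi ⁻¹' {m}, u q p = q ^ m * ((1:ℝ) / ((p : ℕ × ℕ).2 + 1)) := by
      rintro ⟨p, hp⟩
      simp only [Set.mem_preimage, Set.mem_singleton_iff] at hp
      simp [u, hp, div_eq_mul_inv, one_div]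
    rw [tsum_congr this, tsum_mul_left, c, mul_comm]
  rw [he]
  exact h

lemma G_zero : G 0 = 0 := by
  have : ∀ p : ℕ × ℕ, u 0 p = 0 := by
    rintro ⟨n, k⟩
    have hφ : phi (n, k) ≠ 0 := Nat.mul_ne_zero (by omega) (by omega)
    rw [u, zero_pow hφ, zero_div]
  simp [G, tsum_congr this]

lemma one_sub_pos {q : ℝ} (hq : |q| < 1) (n : ℕ) : 0 < 1 - q ^ (n + 2) := by
  have : |q ^ (n + 2)| < 1 := by
    rw [abs_pow]; exact pow_lt_one₀ (abs_nonneg q) hq (by omega)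
  have := abs_lt.1 this
  linarith

lemma Fmu_eq_exp {μ : ℝ} {q : ℝ} (hq : |q| < 1) : Fmu μ q = Real.exp (G q * μ) := by
  have h1 : HasSum (fun n : ℕ => -Real.log (1 - q ^ (n + 2)) * μ) (G q * μ) :=
    (hasSum_log hq).mul_right μ
  have h2 := h1.rexp
  rw [Fmu, ← h2.tprod_eq]
  apply tprod_congr
  intro n
  rw [Function.comp_apply, Real.rpow_def_of_pos (one_sub_pos hq n)]
  ring_nf

open FormalMultilinearSeries

/-- Power series of `q ↦ G q * μ`. -/
noncomputable def P (μ : ℝ) : FormalMultilinearSeries ℝ ℝ ℝ :=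
  ofScalars ℝ (fun m => c m * μ)

/-- Power series of `Real.exp`. -/
noncomputable def Q : FormalMultilinearSeries ℝ ℝ ℝ :=
  ofScalars ℝ (fun n => ((n.factorial : ℝ))⁻¹)

lemma hasFPowerSeriesAt_exp : HasFPowerSeriesAt Real.exp Q 0 := by
  refine ⟨((1 : NNReal) : ENNReal), ?_, ?_, ?_⟩
  · apply Q.le_radius_of_summable
    have hs : Summable (fun n : ℕ => (1:ℝ) ^ n / n.factorial) := Real.summable_pow_div_factorial 1
    apply hs.congr
    intro n
    rw [Q, ofScalars_norm]
    simp [Real.norm_eq_abs, abs_of_nonneg, div_eq_mul_inv, inv_nonneg]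
  · norm_num
  · intro y _
    have h := NormedSpace.expSeries_div_hasSum_exp (0 + y)
    rw [← Real.exp_eq_exp_ℝ] at h
    have he : (fun n => Q n (fun _ => y)) = fun n : ℕ => y ^ n / n.factorial := by
      funext n
      rw [Q, ofScalars_apply_eq]
      simp [div_eq_mul_inv, mul_comm]
    simp only [zero_add] at h ⊢
    rw [he]
    exact h

lemma hasFPowerSeriesAt_inner (μ : ℝ) (hμ : 0 ≤ μ) :
    HasFPowerSeriesAt (fun q => G q * μ) (P μ) 0 := by
  refine ⟨((1/2 : NNReal) : ENNReal), ?_, ?_, ?_⟩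
  · apply (P μ).le_radius_of_summable
    have habs : |(1/2 : ℝ)| < 1 := by rw [abs_of_nonneg] <;> norm_num
    have hs : Summable (fun m => (c m * ((1/2 : NNReal) : ℝ) ^ m) * μ) := by
      have := ((hasSum_coeff (q := (1/2 : ℝ)) habs).summable).mul_right μ
      refine this.congr fun m => ?_
      all_goals norm_num
    apply hs.congr
    intro m
    rw [P, ofScalars_norm]
    rw [Real.norm_eq_abs, abs_of_nonneg (mul_nonneg (c_nonneg m) hμ)]
    ring
  · norm_num
  · intro y hy
    rw [Metric.emetric_ball_nnreal, mem_ball_zero_iff, Real.norm_eq_abs] at hy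
    have hy' : |y| < 1 := by
      refine hy.trans ?_
      norm_num
    have h := (hasSum_coeff hy').mul_right μ
    have he : (fun m => P μ m (fun _ => y)) = fun m => (c m * y ^ m) * μ := by
      funext m
      rw [P, ofScalars_apply_eq]
      simp only [smul_eq_mul]
      ring
    simp only [zero_add]
    rw [he]
    exact h

lemma P_coeff_nonneg (μ : ℝ) (hμ : 0 ≤ μ) (n : ℕ) : 0 ≤ P μ n (fun _ => 1) := by
  rw [P, ofScalars_apply_eq]
  simpa using mul_nonneg (mul_nonneg (c_nonneg n) hμ) (by norm_num : (0:ℝ) ≤ 1 ^ n)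

lemma Q_coeff_nonneg (n : ℕ) : 0 ≤ Q n (fun _ => 1) := by
  rw [Q, ofScalars_apply_eq]
  positivity

/-- Composition of series with nonnegative diagonal coefficients again has
nonnegative diagonal coefficients. -/
lemma comp_coeff_nonneg (p q : FormalMultilinearSeries ℝ ℝ ℝ)
    (hp : ∀ n, 0 ≤ p n (fun _ => 1)) (hq : ∀ n, 0 ≤ q n (fun _ => 1)) (n : ℕ) :
    0 ≤ (p.comp q) n (fun _ => 1) := by
  rw [FormalMultilinearSeries.comp, ContinuousMultilinearMap.sum_apply]
  apply Finset.sum_nonneg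
  intro c _
  rw [FormalMultilinearSeries.compAlongComposition_apply]
  have h1 : q.applyComposition c (fun _ => 1)
      = fun i => (q (c.blocksFun i) (fun _ => 1)) • (1 : ℝ) := by
    funext i
    simp [FormalMultilinearSeries.applyComposition]
  rw [h1, ContinuousMultilinearMap.map_smul_univ]
  exact smul_nonneg (Finset.prod_nonneg fun i _ => hq _) (hp _)

lemma hasFPowerSeriesAt_Fmu (μ : ℝ) (hμ : 0 ≤ μ) :
    HasFPowerSeriesAt (Fmu μ) (Q.comp (P μ)) 0 := by
  have hinner := hasFPowerSeriesAt_inner μ hμ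
  have h0 : (fun q => G q * μ) 0 = 0 := by simp [G_zero]
  have hexp : HasFPowerSeriesAt Real.exp Q ((fun q => G q * μ) 0) := by
    rw [h0]; exact hasFPowerSeriesAt_exp
  have hcomp := HasFPowerSeriesAt.comp (f := fun q => G q * μ) (x := (0:ℝ)) hexp hinner
  apply hcomp.congr
  filter_upwards [Metric.ball_mem_nhds (0:ℝ) one_pos] with q hq
  rw [mem_ball_zero_iff, Real.norm_eq_abs] at hq
  exact (Fmu_eq_exp hq).symm

end FmuAux

/-- For `μ > 0`, all Taylor coefficients of `F_μ` at `0` are nonnegative, and the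
zeroth coefficient equals `1`. -/
theorem taylorCoeff_Fmu_nonneg (μ : ℝ) (hμ : 0 < μ) :
    (∀ n : ℕ, 0 ≤ taylorCoeff (Fmu μ) n) ∧ taylorCoeff (Fmu μ) 0 = 1 := by
  obtain ⟨r, hball⟩ := FmuAux.hasFPowerSeriesAt_Fmu μ hμ.le
  constructor
  · intro n
    have h1 : (n.factorial : ℝ) • ((FmuAux.Q.comp (FmuAux.P μ)) n (fun _ => 1))
        = iteratedFDeriv ℝ n (Fmu μ) 0 (fun _ => 1) := by
      have := hball.factorial_smul (1:ℝ) n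
      simpa [nsmul_eq_mul] using this
    have h2 : iteratedDeriv n (Fmu μ) 0
        = (n.factorial : ℝ) * ((FmuAux.Q.comp (FmuAux.P μ)) n (fun _ => 1)) := by
      rw [iteratedDeriv_eq_iteratedFDeriv, ← h1, smul_eq_mul]
    rw [taylorCoeff, h2]
    have hcoeff := FmuAux.comp_coeff_nonneg FmuAux.Q (FmuAux.P μ)
      FmuAux.Q_coeff_nonneg (FmuAux.P_coeff_nonneg μ hμ.le) n
    positivity
  · rw [taylorCoeff, iteratedDeriv_zero]
    have h0 : Fmu μ 0 = 1 := by
      rw [Fmu]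
      have : ∀ n : ℕ, (1 - (0:ℝ) ^ (n + 2)) ^ (-μ) = 1 := by
        intro n
        rw [zero_pow (by omega), sub_zero, Real.one_rpow]
      rw [tprod_congr this, tprod_one]
    simp [h0]
end

section
/- For every real number ν ≥ 1 and every integer n ≥ 0, the n-th Taylor coefficient a_n(ν) of F_ν at 0 is at least the number of partitions of n all of whose parts are at least 2 (which is the n-th Taylor coefficient of F_1). -/
open PowerSeries Finset Filter

namespace PMT

/-- `f` is represented on `(-r,r)` by the power series with coefficients of `Φ`. -/
def Rep (f : ℝ → ℝ) (Φ : PowerSeries ℝ) (r : ℝ) : Prop :=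
  ∀ q : ℝ, |q| < r → HasSum (fun m : ℕ => (PowerSeries.coeff (R := ℝ) m Φ) * q ^ m) (f q)

/-- nonnegative coefficients -/
def NN (Φ : PowerSeries ℝ) : Prop := ∀ m : ℕ, 0 ≤ PowerSeries.coeff (R := ℝ) m Φ

theorem Rep.congr {f g : ℝ → ℝ} {Φ : PowerSeries ℝ} {r : ℝ} (h : Rep f Φ r)
    (hfg : ∀ q, |q| < r → f q = g q) : Rep g Φ r := fun q hq => hfg q hq ▸ h q hq

theorem Rep.mono {f : ℝ → ℝ} {Φ : PowerSeries ℝ} {r r' : ℝ} (h : Rep f Φ r) (hr : r' ≤ r) :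
    Rep f Φ r' := fun q hq => h q (lt_of_lt_of_le hq hr)

theorem Rep.one {r : ℝ} : Rep (fun _ => 1) 1 r := by
  intro q hq
  have : HasSum (fun m : ℕ => if m = 0 then (1 : ℝ) else 0) 1 := by
    simpa using hasSum_ite_eq (0 : ℕ) (1 : ℝ)
  refine this.congr_fun fun m => ?_
  rcases eq_or_ne m 0 with rfl | hm <;> simp [PowerSeries.coeff_one, *]

theorem NN.one : NN (1 : PowerSeries ℝ) := by
  intro m; rcases eq_or_ne m 0 with rfl | hm <;> simp [PowerSeries.coeff_one, *]


theorem Rep.summable_norm {f : ℝ → ℝ} {Φ : PowerSeries ℝ} {r : ℝ} (h : Rep f Φ r) (hΦ : NN Φ)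
    {q : ℝ} (hq : |q| < r) :
    Summable fun m : ℕ => ‖(PowerSeries.coeff (R := ℝ) m Φ) * q ^ m‖ := by
  have h2 : HasSum (fun m : ℕ => (PowerSeries.coeff (R := ℝ) m Φ) * |q| ^ m) (f |q|) :=
    h |q| (by rwa [abs_abs])
  refine h2.summable.congr fun m => ?_
  rw [norm_mul, norm_pow, Real.norm_eq_abs, Real.norm_eq_abs, abs_of_nonneg (hΦ m)]

theorem Rep.mul {f g : ℝ → ℝ} {Φ Ψ : PowerSeries ℝ} {r : ℝ}
    (hf : Rep f Φ r) (hg : Rep g Ψ r) (hΦ : NN Φ) (hΨ : NN Ψ) :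
    Rep (fun q => f q * g q) (Φ * Ψ) r := by
  intro q hq
  have hfq := hf q hq
  have hgq := hg q hq
  have hfn := hf.summable_norm hΦ hq
  have hgn := hg.summable_norm hΨ hq
  have key : ∀ m : ℕ, (PowerSeries.coeff (R := ℝ) m (Φ * Ψ)) * q ^ m
      = ∑ kl ∈ Finset.HasAntidiagonal.antidiagonal m,
        ((PowerSeries.coeff (R := ℝ) kl.1 Φ) * q ^ kl.1) * ((PowerSeries.coeff (R := ℝ) kl.2 Ψ) * q ^ kl.2) := by
    intro m
    rw [PowerSeries.coeff_mul, Finset.sum_mul]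
    refine Finset.sum_congr rfl fun kl hkl => ?_
    rw [← Finset.HasAntidiagonal.mem_antidiagonal.mp hkl, pow_add]; ring
  have hsum : Summable fun m : ℕ => ∑ kl ∈ Finset.HasAntidiagonal.antidiagonal m,
      ((PowerSeries.coeff (R := ℝ) kl.1 Φ) * q ^ kl.1) * ((PowerSeries.coeff (R := ℝ) kl.2 Ψ) * q ^ kl.2) :=
    (summable_norm_sum_mul_antidiagonal_of_summable_norm hfn hgn).of_norm
  have := tsum_mul_tsum_eq_tsum_sum_antidiagonal_of_summable_norm hfn hgn
  rw [hfq.tsum_eq, hgq.tsum_eq] at this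
  have : HasSum (fun m : ℕ => ∑ kl ∈ Finset.HasAntidiagonal.antidiagonal m,
      ((PowerSeries.coeff (R := ℝ) kl.1 Φ) * q ^ kl.1) * ((PowerSeries.coeff (R := ℝ) kl.2 Ψ) * q ^ kl.2))
      (f q * g q) := this ▸ hsum.hasSum
  exact this.congr_fun fun m => key m


theorem NN.mul {Φ Ψ : PowerSeries ℝ} (hΦ : NN Φ) (hΨ : NN Ψ) : NN (Φ * Ψ) := by
  intro m
  rw [PowerSeries.coeff_mul]
  exact Finset.sum_nonneg fun kl _ => mul_nonneg (hΦ _) (hΨ _)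

theorem NN.pow {Φ : PowerSeries ℝ} (hΦ : NN Φ) (k : ℕ) : NN (Φ ^ k) := by
  induction k with
  | zero => simpa using NN.one
  | succ k ih => rw [pow_succ]; exact ih.mul hΦ

theorem Rep.pow {f : ℝ → ℝ} {Φ : PowerSeries ℝ} {r : ℝ} (hf : Rep f Φ r) (hΦ : NN Φ) (k : ℕ) :
    Rep (fun q => f q ^ k) (Φ ^ k) r := by
  induction k with
  | zero => simpa using Rep.one
  | succ k ih =>
      rw [pow_succ]
      exact (ih.mul hf (hΦ.pow k) hΦ).congr fun q _ => by rw [pow_succ]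

theorem Rep.smul {f : ℝ → ℝ} {Φ : PowerSeries ℝ} {r : ℝ} (hf : Rep f Φ r) (c : ℝ) :
    Rep (fun q => c * f q) (c • Φ) r := by
  intro q hq
  refine ((hf q hq).mul_left c).congr_fun fun m => ?_
  rw [PowerSeries.coeff_smul]
  simp [mul_assoc]

theorem NN.smul {Φ : PowerSeries ℝ} (hΦ : NN Φ) {c : ℝ} (hc : 0 ≤ c) : NN (c • Φ) := by
  intro m
  rw [PowerSeries.coeff_smul]
  exact mul_nonneg hc (hΦ m)

theorem Rep.prod {ι : Type*} {s : Finset ι} {f : ι → ℝ → ℝ} {Φ : ι → PowerSeries ℝ} {r : ℝ}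
    (h : ∀ i ∈ s, Rep (f i) (Φ i) r) (hΦ : ∀ i ∈ s, NN (Φ i)) :
    Rep (fun q => ∏ i ∈ s, f i q) (∏ i ∈ s, Φ i) r ∧ NN (∏ i ∈ s, Φ i) := by
  classical
  induction s using Finset.induction_on with
  | empty => simpa using ⟨Rep.one, NN.one⟩
  | @insert a s' hx ih =>
      rw [Finset.prod_insert hx]
      obtain ⟨ihr, ihn⟩ := ih (fun i hi => h i (Finset.mem_insert_of_mem hi))
        (fun i hi => hΦ i (Finset.mem_insert_of_mem hi))
      have ha := h a (Finset.mem_insert_self a s')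
      have han := hΦ a (Finset.mem_insert_self a s')
      refine ⟨?_, han.mul ihn⟩
      exact ((ha.mul ihr han ihn).congr fun q _ => by rw [Finset.prod_insert hx])


/-- Coefficient series of `-log (1 - q^j)`. -/
noncomputable def Lser (j : ℕ) : PowerSeries ℝ :=
  PowerSeries.mk fun m => if j ∣ m ∧ m ≠ 0 then (j : ℝ) / m else 0

theorem Lser_nn (j : ℕ) : NN (Lser j) := by
  intro m
  rw [Lser, PowerSeries.coeff_mk]
  split <;> positivity

theorem coeff_Lser_eq_zero {j m : ℕ} (h : m < j) :
    PowerSeries.coeff (R := ℝ) m (Lser j) = 0 := by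
  rw [Lser, PowerSeries.coeff_mk, if_neg]
  rintro ⟨hdvd, hne⟩
  exact absurd (Nat.le_of_dvd (Nat.pos_of_ne_zero hne) hdvd) (not_le.mpr h)

theorem rep_Lser {j : ℕ} (hj : 1 ≤ j) :
    Rep (fun q => -Real.log (1 - q ^ j)) (Lser j) 1 := by
  intro q hq
  have hqj : |q ^ j| < 1 := by
    rw [abs_pow]
    exact pow_lt_one₀ (abs_nonneg q) hq (by omega)
  have base := Real.hasSum_pow_div_log_of_abs_lt_one hqj
  have hinj : Function.Injective (fun k : ℕ => j * (k + 1)) := by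
    intro a b hab
    simp only at hab
    have := Nat.eq_of_mul_eq_mul_left (show 0 < j by omega) hab
    omega
  have h0 : ∀ m : ℕ, m ∉ Set.range (fun k : ℕ => j * (k + 1)) →
      (PowerSeries.coeff (R := ℝ) m (Lser j)) * q ^ m = 0 := by
    intro m hm
    rw [Lser, PowerSeries.coeff_mk, if_neg, zero_mul]
    rintro ⟨⟨t, rfl⟩, hne⟩
    have ht : t ≠ 0 := by rintro rfl; simp at hne
    refine hm ⟨t - 1, ?_⟩
    simp only
    congr 1
    omega
  rw [← Function.Injective.hasSum_iff hinj h0]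
  refine base.congr_fun fun k => ?_
  show (PowerSeries.coeff (R := ℝ) (j * (k + 1)) (Lser j)) * q ^ (j * (k + 1)) = (q ^ j) ^ (k + 1) / (k + 1)
  rw [Lser, PowerSeries.coeff_mk, if_pos ⟨dvd_mul_right _ _, by positivity⟩, ← pow_mul]
  have hj0 : (j : ℝ) ≠ 0 := by positivity
  rw [Nat.cast_mul]
  field_simp
  push_cast
  ring

/-- Coefficient series of `(1 - q^j)⁻¹`. -/
noncomputable def Gser (j : ℕ) : PowerSeries ℝ :=
  PowerSeries.mk fun m => if j ∣ m then (1 : ℝ) else 0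

theorem Gser_nn (j : ℕ) : NN (Gser j) := by
  intro m
  rw [Gser, PowerSeries.coeff_mk]
  split <;> norm_num

theorem rep_Gser {j : ℕ} (hj : 1 ≤ j) :
    Rep (fun q => (1 - q ^ j)⁻¹) (Gser j) 1 := by
  intro q hq
  have hqj : |q ^ j| < 1 := by
    rw [abs_pow]
    exact pow_lt_one₀ (abs_nonneg q) hq (by omega)
  have base := hasSum_geometric_of_abs_lt_one hqj
  have hinj : Function.Injective (fun k : ℕ => j * k) := fun a b hab => by
    simp only at hab
    exact Nat.eq_of_mul_eq_mul_left (by omega) hab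
  have h0 : ∀ m : ℕ, m ∉ Set.range (fun k : ℕ => j * k) →
      (PowerSeries.coeff (R := ℝ) m (Gser j)) * q ^ m = 0 := by
    intro m hm
    rw [Gser, PowerSeries.coeff_mk, if_neg, zero_mul]
    rintro ⟨t, rfl⟩
    exact hm ⟨t, rfl⟩
  rw [← Function.Injective.hasSum_iff hinj h0]
  refine base.congr_fun fun k => ?_
  show (PowerSeries.coeff (R := ℝ) (j * k) (Gser j)) * q ^ (j * k) = (q ^ j) ^ k
  rw [Gser, PowerSeries.coeff_mk, if_pos (dvd_mul_right _ _), ← pow_mul, one_mul]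


/-- Master lemma: a convergent series of represented functions is represented by the
coefficient-wise sum, provided coefficient `m` only receives contributions from
finitely many (the first `m+1`) summands. -/
theorem rep_tsum {F : ℕ → ℝ → ℝ} {Φ : ℕ → PowerSeries ℝ} {r : ℝ}
    (hrep : ∀ k, Rep (F k) (Φ k) r) (hnn : ∀ k, NN (Φ k))
    (hfin : ∀ m k, m < k → PowerSeries.coeff (R := ℝ) m (Φ k) = 0)
    (hsum : ∀ q : ℝ, 0 ≤ q → q < r → Summable fun k => F k q) :
    Rep (fun q => ∑' k, F k q)
      (PowerSeries.mk fun m => ∑ k ∈ Finset.range (m + 1), PowerSeries.coeff (R := ℝ) m (Φ k)) r := by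
  intro q hq
  set ρ : ℝ := |q| with hρdef
  have hρ : |ρ| < r := by rwa [abs_abs]
  have hρ0 : 0 ≤ ρ := abs_nonneg q
  have hρr : ρ < r := lt_of_le_of_lt (le_abs_self ρ) hρ
  set G : ℕ × ℕ → ℝ := fun p => PowerSeries.coeff (R := ℝ) p.1 (Φ p.2) * q ^ p.1 with hGdef
  have hG' : Summable fun p : ℕ × ℕ => PowerSeries.coeff (R := ℝ) p.2 (Φ p.1) * ρ ^ p.2 := by
    rw [summable_prod_of_nonneg]
    · refine ⟨fun k => (hrep k ρ hρ).summable, ?_⟩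
      refine ((hsum ρ hρ0 hρr).congr fun k => ?_).congr fun k => rfl
      exact ((hrep k ρ hρ).tsum_eq).symm
    · intro p
      exact mul_nonneg (hnn p.1 p.2) (pow_nonneg hρ0 p.2)
  have hG : Summable G := by
    refine Summable.of_norm ?_
    refine (hG'.prod_symm).congr fun p => ?_
    simp only [Prod.fst_swap, Prod.snd_swap, hGdef, norm_mul, norm_pow, Real.norm_eq_abs]
    rw [abs_of_nonneg (hnn p.2 p.1), hρdef]
  have hcol : ∀ m, Summable fun k => G (m, k) := fun m => hG.prod_factor m
  have hrow : ∀ k, Summable fun m => G (m, k) := fun k => (hrep k q hq).summable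
  have htsum : ∑' p, G p = ∑' k, F k q := by
    rw [hG.tsum_prod' hcol,
      (Summable.tsum_comm' (f := fun m k => G (m, k)) hG hcol hrow).symm]
    exact tsum_congr fun k => (hrep k q hq).tsum_eq
  have hmain : HasSum (fun m => ∑' k, G (m, k)) (∑' k, F k q) :=
    HasSum.prod_fiberwise (htsum ▸ hG.hasSum) fun m => (hcol m).hasSum
  refine hmain.congr_fun fun m => ?_
  rw [PowerSeries.coeff_mk, Finset.sum_mul]
  rw [tsum_eq_sum (s := Finset.range (m + 1))
    (fun k hk => by
      have : m < k := by simpa using hk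
      simp [hGdef, hfin m k this])]


theorem neg_log_one_sub_le {x : ℝ} (h0 : 0 ≤ x) (h2 : x ≤ 1 / 2) :
    -Real.log (1 - x) ≤ 2 * x := by
  have h1 : (0 : ℝ) < 1 - x := by linarith
  have hlog := Real.log_le_sub_one_of_pos (inv_pos.mpr h1)
  rw [Real.log_inv] at hlog
  have h2' : (1 - x) * (1 - x)⁻¹ = 1 := mul_inv_cancel₀ h1.ne'
  nlinarith [hlog, h2', sq_nonneg x]

theorem neg_log_one_sub_nonneg {x : ℝ} (h0 : 0 ≤ x) (h1 : x < 1) :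
    0 ≤ -Real.log (1 - x) := by
  have : Real.log (1 - x) ≤ 0 := Real.log_nonpos (by linarith) (by linarith)
  linarith

theorem summable_neg_log (N : ℕ) {q : ℝ} (h0 : 0 ≤ q) (hq : q < 1 / 2) :
    Summable fun n : ℕ => -Real.log (1 - q ^ (n + N + 2)) := by
  refine Summable.of_nonneg_of_le (fun n => ?_) (fun n => ?_)
    ((summable_geometric_of_lt_one h0 (by linarith)).mul_left 2)
  · refine neg_log_one_sub_nonneg (pow_nonneg h0 _) ?_
    exact pow_lt_one₀ h0 (by linarith) (by omega)
  · have hle : q ^ (n + N + 2) ≤ q ^ n := pow_le_pow_of_le_one h0 (by linarith) (by omega)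
    have hle2 : q ^ (n + N + 2) ≤ 1 / 2 := by
      calc q ^ (n + N + 2) ≤ q ^ 1 := pow_le_pow_of_le_one h0 (by linarith) (by omega)
      _ ≤ 1 / 2 := by rw [pow_one]; linarith
    calc -Real.log (1 - q ^ (n + N + 2)) ≤ 2 * q ^ (n + N + 2) :=
          neg_log_one_sub_le (pow_nonneg h0 _) hle2
    _ ≤ 2 * q ^ n := by linarith

/-- The log-sum function `S_N q = ∑_{n} -log (1 - q^(n+N+2))`. -/
noncomputable def Sfun (N : ℕ) (q : ℝ) : ℝ := ∑' n : ℕ, -Real.log (1 - q ^ (n + N + 2))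

/-- Its coefficient series. -/
noncomputable def Sser (N : ℕ) : PowerSeries ℝ :=
  PowerSeries.mk fun m => ∑ k ∈ Finset.range (m + 1), PowerSeries.coeff (R := ℝ) m (Lser (k + N + 2))

theorem Sser_nn (N : ℕ) : NN (Sser N) := by
  intro m
  rw [Sser, PowerSeries.coeff_mk]
  exact Finset.sum_nonneg fun k _ => Lser_nn _ m

theorem coeff_Sser_eq_zero {N m : ℕ} (h : m < N + 2) : PowerSeries.coeff (R := ℝ) m (Sser N) = 0 := by
  rw [Sser, PowerSeries.coeff_mk]
  exact Finset.sum_eq_zero fun k _ => coeff_Lser_eq_zero (by omega)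

theorem rep_Sfun (N : ℕ) : Rep (Sfun N) (Sser N) (1 / 2) := by
  have := rep_tsum (F := fun k q => -Real.log (1 - q ^ (k + N + 2)))
    (Φ := fun k => Lser (k + N + 2)) (r := 1 / 2)
    (fun k => (rep_Lser (by omega)).mono (by norm_num))
    (fun k => Lser_nn _)
    (fun m k hmk => coeff_Lser_eq_zero (by omega))
    (fun q h0 hr => summable_neg_log N h0 hr)
  exact this

/-- Coefficient series of `exp ∘ g`, where `Φ` is the coefficient series of `g`. -/
noncomputable def Eser (Φ : PowerSeries ℝ) : PowerSeries ℝ :=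
  PowerSeries.mk fun m => ∑ k ∈ Finset.range (m + 1),
    PowerSeries.coeff (R := ℝ) m ((k.factorial : ℝ)⁻¹ • Φ ^ k)

theorem Eser_nn {Φ : PowerSeries ℝ} (hΦ : NN Φ) : NN (Eser Φ) := by
  intro m
  rw [Eser, PowerSeries.coeff_mk]
  exact Finset.sum_nonneg fun k _ => ((hΦ.pow k).smul (by positivity)) m

theorem rep_exp {g : ℝ → ℝ} {Φ : PowerSeries ℝ} {r : ℝ} (hg : Rep g Φ r) (hΦ : NN Φ)
    (h0 : PowerSeries.constantCoeff (R := ℝ) Φ = 0) :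
    Rep (fun q => Real.exp (g q)) (Eser Φ) r := by
  have key := rep_tsum (F := fun k q => (k.factorial : ℝ)⁻¹ * g q ^ k)
    (Φ := fun k => (k.factorial : ℝ)⁻¹ • Φ ^ k) (r := r)
    (fun k => (hg.pow hΦ k).smul _)
    (fun k => (hΦ.pow k).smul (by positivity))
    (fun m k hmk => by
      rw [PowerSeries.coeff_smul]
      have hX : (PowerSeries.X : PowerSeries ℝ) ^ k ∣ Φ ^ k :=
        pow_dvd_pow_of_dvd (PowerSeries.X_dvd_iff.mpr h0) k
      rw [PowerSeries.X_pow_dvd_iff.mp hX m hmk, smul_zero])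
    (fun q _ _ => ((Real.summable_pow_div_factorial (g q)).congr fun k => by
      rw [div_eq_inv_mul]))
  refine key.congr fun q _ => ?_
  have hexp : Real.exp (g q) = ∑' k : ℕ, g q ^ k / (k.factorial : ℝ) := by
    rw [Real.exp_eq_exp_ℝ, NormedSpace.exp_eq_tsum_div]
  rw [hexp]
  exact tsum_congr fun k => by rw [div_eq_inv_mul]

theorem coeff_Eser_zero (Φ : PowerSeries ℝ) (h0 : PowerSeries.constantCoeff (R := ℝ) Φ = 0) :
    PowerSeries.coeff (R := ℝ) 0 (Eser Φ) = 1 := by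
  rw [Eser, PowerSeries.coeff_mk]
  simp [PowerSeries.coeff_zero_eq_constantCoeff]

theorem coeff_Eser_eq_zero {Φ : PowerSeries ℝ} {d m : ℕ}
    (hord : ∀ j < d, PowerSeries.coeff (R := ℝ) j Φ = 0) (h1 : 1 ≤ m) (hm : m < d) :
    PowerSeries.coeff (R := ℝ) m (Eser Φ) = 0 := by
  rw [Eser, PowerSeries.coeff_mk]
  refine Finset.sum_eq_zero fun k _ => ?_
  rw [PowerSeries.coeff_smul]
  rcases Nat.eq_zero_or_pos k with rfl | hk
  · rw [pow_zero, PowerSeries.coeff_one, if_neg (by omega), smul_zero]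
  · have hXd : (PowerSeries.X : PowerSeries ℝ) ^ d ∣ Φ :=
      PowerSeries.X_pow_dvd_iff.mpr hord
    have : (PowerSeries.X : PowerSeries ℝ) ^ d ∣ Φ ^ k :=
      hXd.trans (dvd_pow_self Φ (by omega))
    rw [PowerSeries.X_pow_dvd_iff.mp this m hm, smul_zero]


/-- From a series representation to Taylor coefficients. -/
theorem taylorCoeff_eq {f : ℝ → ℝ} {Φ : PowerSeries ℝ} {r : ℝ} (h : Rep f Φ r) (hΦ : NN Φ)
    (hr : 0 < r) (n : ℕ) : taylorCoeff f n = PowerSeries.coeff (R := ℝ) n Φ := by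
  set c : ℕ → ℝ := fun m => PowerSeries.coeff (R := ℝ) m Φ with hc
  set p : FormalMultilinearSeries ℝ ℝ ℝ := FormalMultilinearSeries.ofScalars ℝ c with hp
  set ρ : NNReal := Real.toNNReal (r / 2) with hρ
  have hρr : (ρ : ℝ) = r / 2 := Real.coe_toNNReal _ (by linarith)
  have hρpos : (0 : ℝ) < ρ := by rw [hρr]; linarith
  have hrad : (ρ : ENNReal) ≤ p.radius := by
    refine p.le_radius_of_summable (r := ρ) ?_
    have hs : Summable fun m => c m * (r / 2) ^ m := by
      refine (h (r / 2) ?_).summable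
      rw [abs_of_nonneg (by linarith)]
      linarith
    refine hs.congr fun m => ?_
    rw [hp, FormalMultilinearSeries.ofScalars_norm, Real.norm_eq_abs, abs_of_nonneg (hΦ m), hρr]
  have hball : HasFPowerSeriesOnBall f p 0 ρ := by
    refine ⟨hrad, by exact_mod_cast hρpos, fun {y} hy => ?_⟩
    rw [mem_emetric_ball_zero_iff] at hy
    have hy' : |y| < r := by
      have : ‖y‖ < (ρ : ℝ) := by exact_mod_cast hy
      rw [Real.norm_eq_abs] at this
      linarith [hρr ▸ this]
    rw [zero_add]
    refine (h y hy').congr_fun fun m => ?_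
    rw [hp, FormalMultilinearSeries.ofScalars_apply_eq, smul_eq_mul]
  have hfact := hball.factorial_smul (y := (1 : ℝ)) n
  have hpn : p n (fun _ => (1 : ℝ)) = c n := by
    rw [hp, FormalMultilinearSeries.ofScalars_apply_eq, one_pow, smul_eq_mul, mul_one]
  rw [taylorCoeff, iteratedDeriv_eq_iteratedFDeriv, ← hfact, hpn, nsmul_eq_mul]
  field_simp
  rfl

theorem abs_log_one_sub_le {x : ℝ} (h : |x| < 1) :
    |Real.log (1 - x)| ≤ -Real.log (1 - |x|) := by
  have hx1 : x < 1 := lt_of_le_of_lt (le_abs_self x) h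
  have h1 : (0 : ℝ) < 1 - x := by linarith
  have h2 : (0 : ℝ) < 1 - |x| := by
    have := abs_nonneg x; linarith
  rw [abs_le]
  constructor
  · have : Real.log (1 - |x|) ≤ Real.log (1 - x) :=
      Real.log_le_log h2 (by linarith [neg_abs_le x, le_abs_self x])
    linarith
  · have hb1 : Real.log (1 - x) ≤ Real.log (1 + |x|) :=
      Real.log_le_log h1 (by linarith [neg_abs_le x])
    have hb2 : Real.log (1 + |x|) ≤ |x| := by
      have := Real.log_le_sub_one_of_pos (show (0:ℝ) < 1 + |x| by linarith [abs_nonneg x])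
      linarith
    have hb3 : |x| ≤ -Real.log (1 - |x|) := by
      have := Real.log_le_sub_one_of_pos h2
      linarith
    linarith

theorem summable_neg_log' (N : ℕ) {q : ℝ} (hq : |q| < 1 / 2) :
    Summable fun n : ℕ => -Real.log (1 - q ^ (n + N + 2)) := by
  refine Summable.of_norm ?_
  have hbase := summable_neg_log N (abs_nonneg q) hq
  refine Summable.of_nonneg_of_le (fun n => norm_nonneg _) (fun n => ?_) hbase
  rw [Real.norm_eq_abs, abs_neg]
  have h1 : |q ^ (n + N + 2)| < 1 := by
    rw [abs_pow]
    exact pow_lt_one₀ (abs_nonneg q) (by linarith) (by omega)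
  calc |Real.log (1 - q ^ (n + N + 2))| ≤ -Real.log (1 - |q ^ (n + N + 2)|) :=
        abs_log_one_sub_le h1
  _ = -Real.log (1 - |q| ^ (n + N + 2)) := by rw [abs_pow]

theorem Fmu_eq_exp (μ : ℝ) {q : ℝ} (hq : |q| < 1 / 2) :
    Fmu μ q = Real.exp (μ * Sfun 0 q) := by
  have hpos : ∀ n : ℕ, (0 : ℝ) < 1 - q ^ (n + 2) := by
    intro n
    have : |q ^ (n + 2)| < 1 := by
      rw [abs_pow]
      exact pow_lt_one₀ (abs_nonneg q) (by linarith) (by omega)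
    have := (abs_lt.mp this).2
    linarith
  have hS : HasSum (fun n : ℕ => μ * -Real.log (1 - q ^ (n + 0 + 2))) (μ * Sfun 0 q) := by
    rw [Sfun]
    exact (summable_neg_log' 0 hq).hasSum.mul_left μ
  have hprod : HasProd (fun n : ℕ => Real.exp (μ * -Real.log (1 - q ^ (n + 0 + 2))))
      (Real.exp (μ * Sfun 0 q)) := hS.rexp
  rw [Fmu, ← hprod.tprod_eq]
  refine tprod_congr fun n => ?_
  rw [Nat.add_zero, Real.rpow_def_of_pos (hpos n)]
  ring_nf


/-- The coefficient series of `Fmu μ`. -/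
noncomputable def Dser (μ : ℝ) : PowerSeries ℝ := Eser (μ • Sser 0)

theorem constantCoeff_smul_Sser (μ : ℝ) (N : ℕ) :
    PowerSeries.constantCoeff (R := ℝ) (μ • Sser N) = 0 := by
  rw [← PowerSeries.coeff_zero_eq_constantCoeff_apply, PowerSeries.coeff_smul,
    coeff_Sser_eq_zero (by omega), smul_zero]

theorem rep_Fmu {μ : ℝ} (hμ : 0 ≤ μ) : Rep (Fmu μ) (Dser μ) (1 / 2) := by
  have hrep : Rep (fun q => μ * Sfun 0 q) (μ • Sser 0) (1 / 2) := (rep_Sfun 0).smul μ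
  have hnn : NN (μ • Sser 0) := (Sser_nn 0).smul hμ
  have := rep_exp hrep hnn (constantCoeff_smul_Sser μ 0)
  exact this.congr fun q hq => (Fmu_eq_exp μ hq).symm

theorem Dser_nn {μ : ℝ} (hμ : 0 ≤ μ) : NN (Dser μ) := Eser_nn ((Sser_nn 0).smul hμ)

theorem coeff_Dser_mono {ν : ℝ} (hν : 1 ≤ ν) (m : ℕ) :
    PowerSeries.coeff (R := ℝ) m (Dser 1) ≤ PowerSeries.coeff (R := ℝ) m (Dser ν) := by
  rw [Dser, Dser, Eser, Eser, PowerSeries.coeff_mk, PowerSeries.coeff_mk]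
  refine Finset.sum_le_sum fun k _ => ?_
  rw [smul_pow, smul_pow, PowerSeries.coeff_smul, PowerSeries.coeff_smul,
    PowerSeries.coeff_smul, PowerSeries.coeff_smul]
  have hpos : (0 : ℝ) ≤ PowerSeries.coeff (R := ℝ) m (Sser 0 ^ k) := (Sser_nn 0).pow k m
  have h1 : (1 : ℝ) ^ k ≤ ν ^ k := by rw [one_pow]; exact one_le_pow₀ hν
  rw [smul_eq_mul, smul_eq_mul, smul_eq_mul, smul_eq_mul]
  have hfk : (0 : ℝ) ≤ (k.factorial : ℝ)⁻¹ := by positivity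
  refine mul_le_mul_of_nonneg_left ?_ hfk
  exact mul_le_mul_of_nonneg_right (by simpa using h1) hpos


open scoped Classical in
/-- A convenience constructor for the power series whose coefficients indicate a subset. -/
noncomputable def indicatorSeries (s : Set ℕ) : PowerSeries ℝ :=
  PowerSeries.mk fun n => if n ∈ s then 1 else 0

theorem coeff_indicator (s : Set ℕ) (n : ℕ) [Decidable (n ∈ s)] :
    PowerSeries.coeff (R := ℝ) n (indicatorSeries s) = if n ∈ s then 1 else 0 := by
  rw [indicatorSeries, PowerSeries.coeff_mk]
  congr 1

open scoped Classical in
-- The main workhorse of the partition theorem proof, from the Mathlib archive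
-- (`Archive/Wiedijk100Theorems/Partition.lean`, authors Bhavik Mehta and Aaron Anderson).
theorem partialGF_prop (n : ℕ) (s : Finset ℕ) (hs : ∀ i ∈ s, 0 < i)
    (c : ℕ → Set ℕ) (hc : ∀ i, i ∉ s → 0 ∈ c i) :
    #{p : n.Partition | (∀ j, p.parts.count j ∈ c j) ∧ ∀ j ∈ p.parts, j ∈ s} =
      PowerSeries.coeff (R := ℝ) n (∏ i ∈ s, indicatorSeries ((· * i) '' c i)) := by
  simp_rw [PowerSeries.coeff_prod, coeff_indicator, prod_boole, sum_boole]
  apply congr_arg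
  simp only [mem_univ, forall_true_left, not_and, not_forall, exists_prop,
    Set.mem_image, not_exists]
  set φ : (a : Nat.Partition n) →
    a ∈ filter (fun p ↦ (∀ (j : ℕ), Multiset.count j p.parts ∈ c j) ∧ ∀ j ∈ p.parts, j ∈ s) univ →
    ℕ →₀ ℕ := fun p _ => {
      toFun := fun i => Multiset.count i p.parts • i
      support := Finset.filter (fun i => i ≠ 0) p.parts.toFinset
      mem_support_toFun := fun a => by
        simp only [smul_eq_mul, ne_eq, mul_eq_zero, Multiset.count_eq_zero]
        rw [not_or, not_not]
        simp only [Multiset.mem_toFinset, not_not, mem_filter] }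
  refine Finset.card_bij φ ?_ ?_ ?_
  · intro a ha
    simp only [φ, not_forall, not_exists, not_and, exists_prop, mem_filter]
    rw [mem_finsuppAntidiag]
    dsimp only [ne_eq, smul_eq_mul, id_eq, eq_mpr_eq_cast, le_eq_subset, Finsupp.coe_mk]
    simp only [mem_univ, forall_true_left, not_and, not_forall, exists_prop,
      mem_filter, true_and] at ha
    refine ⟨⟨?_, fun i ↦ ?_⟩, fun i _ ↦ ⟨a.parts.count i, ha.1 i, rfl⟩⟩
    · conv_rhs => simp [← a.parts_sum]
      rw [sum_multiset_count_of_subset _ s]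
      · simp only [smul_eq_mul]
      · intro i
        simp only [Multiset.mem_toFinset, not_not, mem_filter]
        apply ha.2
    · simp only [ne_eq, Multiset.mem_toFinset, not_not, mem_filter, and_imp]
      exact fun hi _ ↦ ha.2 i hi
  · intro p₁ hp₁ p₂ hp₂ h
    apply Nat.Partition.ext
    simp only [true_and, mem_univ, mem_filter] at hp₁ hp₂
    ext i
    simp only [φ, ne_eq, Multiset.mem_toFinset, not_not, smul_eq_mul, Finsupp.mk.injEq] at h
    by_cases hi : i = 0
    · rw [hi]
      rw [Multiset.count_eq_zero_of_notMem]
      · rw [Multiset.count_eq_zero_of_notMem]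
        intro a; exact Nat.lt_irrefl 0 (hs 0 (hp₂.2 0 a))
      intro a; exact Nat.lt_irrefl 0 (hs 0 (hp₁.2 0 a))
    · rw [← mul_left_inj' hi]
      rw [funext_iff] at h
      exact h.2 i
  · simp only [φ, mem_filter, mem_finsuppAntidiag, mem_univ, exists_prop, true_and, and_assoc]
    rintro f ⟨hf, hf₃, hf₄⟩
    have hf' : f ∈ finsuppAntidiag s n := mem_finsuppAntidiag.mpr ⟨hf, hf₃⟩
    simp only [mem_finsuppAntidiag] at hf'
    refine ⟨⟨∑ i ∈ s, Multiset.replicate (f i / i) i, ?_, ?_⟩, ?_, ?_, ?_⟩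
    · intro i hi
      simp only [exists_prop, Multiset.mem_sum, Finset.mem_map, Function.Embedding.coeFn_mk] at hi
      rcases hi with ⟨t, ht, z⟩
      apply hs
      rwa [Multiset.eq_of_mem_replicate z]
    · simp_rw [Multiset.sum_sum, Multiset.sum_replicate, Nat.nsmul_eq_mul]
      rw [← hf'.1]
      refine sum_congr rfl fun i hi => Nat.div_mul_cancel ?_
      rcases hf₄ i hi with ⟨w, _, hw₂⟩
      rw [← hw₂]
      exact dvd_mul_left _ _
    · intro i
      simp_rw [Multiset.count_sum', Multiset.count_replicate, sum_ite_eq']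
      split_ifs with h
      · rcases hf₄ i h with ⟨w, hw₁, hw₂⟩
        rwa [← hw₂, Nat.mul_div_cancel _ (hs i h)]
      · exact hc _ h
    · intro i hi
      rw [Multiset.mem_sum] at hi
      rcases hi with ⟨j, hj₁, hj₂⟩
      rwa [Multiset.eq_of_mem_replicate hj₂]
    · ext i
      simp_rw [Multiset.count_sum', Multiset.count_replicate, sum_ite_eq']
      simp only [ne_eq, Multiset.mem_toFinset, not_not, smul_eq_mul, ite_mul,
        zero_mul, Finsupp.coe_mk]
      split_ifs with h
      · apply Nat.div_mul_cancel
        rcases hf₄ i h with ⟨w, _, hw₂⟩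
        apply Dvd.intro_left _ hw₂
      · apply symm
        rw [← Finsupp.notMem_support_iff]
        exact notMem_mono hf'.2 h


/-- The allowed part sizes `{2, ..., n+1}`. -/
def partsSet (n : ℕ) : Finset ℕ := (range n).map ⟨(· + 2), fun a b h => by simpa using h⟩

noncomputable def HeadSer (n : ℕ) : PowerSeries ℝ := ∏ i ∈ partsSet n, Gser i

noncomputable def HeadF (n : ℕ) (q : ℝ) : ℝ := ∏ i ∈ partsSet n, (1 - q ^ i)⁻¹

theorem mem_partsSet {n j : ℕ} : j ∈ partsSet n ↔ ∃ a, a < n ∧ a + 2 = j := by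
  simp [partsSet]
  rfl

theorem rep_HeadF (n : ℕ) : Rep (HeadF n) (HeadSer n) 1 :=
  (Rep.prod (fun i hi => rep_Gser (by obtain ⟨a, _, rfl⟩ := mem_partsSet.mp hi; omega))
    (fun i _ => Gser_nn i)).1

theorem HeadSer_nn (n : ℕ) : NN (HeadSer n) :=
  (Rep.prod (fun i hi => rep_Gser (by obtain ⟨a, _, rfl⟩ := mem_partsSet.mp hi; omega))
    (fun i _ => Gser_nn i)).2

open scoped Classical in
theorem Gser_eq_indicator (j : ℕ) : Gser j = indicatorSeries ((· * j) '' Set.univ) := by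
  ext m
  rw [Gser, indicatorSeries, PowerSeries.coeff_mk, PowerSeries.coeff_mk]
  have hiff : (j ∣ m) ↔ m ∈ (· * j) '' Set.univ := by
    simp only [Set.image_univ, Set.mem_range]
    constructor
    · rintro ⟨c, rfl⟩; exact ⟨c, mul_comm c j ▸ rfl⟩
    · rintro ⟨c, rfl⟩; exact Dvd.intro_left c rfl
  exact if_congr hiff rfl rfl

open scoped Classical in
theorem coeff_HeadSer (n : ℕ) :
    (partitionsMinTwo n : ℝ) = PowerSeries.coeff (R := ℝ) n (HeadSer n) := by
  have h := partialGF_prop n (partsSet n)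
    (fun i hi => by obtain ⟨a, _, rfl⟩ := mem_partsSet.mp hi; omega)
    (fun _ => Set.univ) (fun _ _ => Set.mem_univ 0)
  have hser : (∏ i ∈ partsSet n, indicatorSeries ((· * i) '' Set.univ)) = HeadSer n := by
    rw [HeadSer]
    exact Finset.prod_congr rfl fun i _ => (Gser_eq_indicator i).symm
  rw [hser] at h
  rw [← h]
  norm_cast
  rw [partitionsMinTwo, Nat.card_eq_fintype_card, Fintype.card_subtype]
  congr 1
  apply Finset.filter_congr
  intro p _
  simp only [Set.mem_univ, forall_const, true_and]
  constructor
  · intro hall j hj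
    have h2 : 2 ≤ j := hall j hj
    have hjn : j ≤ n := by
      simpa [p.parts_sum] using Multiset.single_le_sum (fun _ _ => Nat.zero_le _) _ hj
    exact mem_partsSet.mpr ⟨j - 2, by omega, by omega⟩
  · intro hall j hj
    obtain ⟨a, _, rfl⟩ := mem_partsSet.mp (hall j hj)
    omega

noncomputable def TailSer (n : ℕ) : PowerSeries ℝ := Eser (Sser n)

theorem constantCoeff_Sser (n : ℕ) : PowerSeries.constantCoeff (R := ℝ) (Sser n) = 0 := by
  rw [← PowerSeries.coeff_zero_eq_constantCoeff_apply]
  exact coeff_Sser_eq_zero (by omega)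

theorem rep_TailF (n : ℕ) : Rep (fun q => Real.exp (Sfun n q)) (TailSer n) (1 / 2) :=
  rep_exp (rep_Sfun n) (Sser_nn n) (constantCoeff_Sser n)

theorem one_sub_pow_pos {q : ℝ} (hq : |q| < 1) {j : ℕ} (hj : 1 ≤ j) : 0 < 1 - q ^ j := by
  have h : |q ^ j| < 1 := by
    rw [abs_pow]
    exact pow_lt_one₀ (abs_nonneg q) hq (by omega)
  have := (abs_lt.mp h).2
  linarith

theorem Fmu_one_eq (n : ℕ) {q : ℝ} (hq : |q| < 1 / 2) :
    Fmu 1 q = HeadF n q * Real.exp (Sfun n q) := by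
  rw [Fmu_eq_exp 1 hq, one_mul]
  have hsplit : Sfun 0 q = (∑ i ∈ range n, -Real.log (1 - q ^ (i + 0 + 2))) + Sfun n q := by
    rw [Sfun, ← Summable.sum_add_tsum_nat_add n (summable_neg_log' 0 hq), Sfun]
  rw [hsplit, Real.exp_add]
  congr 1
  rw [Real.exp_sum, HeadF, partsSet, Finset.prod_map]
  refine Finset.prod_congr rfl fun i _ => ?_
  simp only [Nat.add_zero, Function.Embedding.coeFn_mk]
  rw [Real.exp_neg, Real.exp_log (one_sub_pow_pos (by linarith) (by omega))]
  rfl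

theorem taylor_Fmu_one (n : ℕ) : taylorCoeff (Fmu 1) n = (partitionsMinTwo n : ℝ) := by
  have htail_nn : NN (TailSer n) := Eser_nn (Sser_nn n)
  have hrep : Rep (Fmu 1) (HeadSer n * TailSer n) (1 / 2) :=
    (((rep_HeadF n).mono (by norm_num)).mul (rep_TailF n) (HeadSer_nn n) htail_nn).congr
      fun q hq => (Fmu_one_eq n hq).symm
  rw [taylorCoeff_eq hrep ((HeadSer_nn n).mul htail_nn) (by norm_num) n]
  rw [PowerSeries.coeff_mul]
  rw [Finset.sum_eq_single (n, 0)]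
  · rw [TailSer, coeff_Eser_zero _ (constantCoeff_Sser n), mul_one, coeff_HeadSer]
  · rintro ⟨i, j⟩ hmem hne
    have hij : i + j = n := Finset.HasAntidiagonal.mem_antidiagonal.mp hmem
    have hj : j ≠ 0 := by rintro rfl; exact hne (by simp [← hij])
    have hz : PowerSeries.coeff (R := ℝ) j (TailSer n) = 0 := by
      refine coeff_Eser_eq_zero (d := n + 2) (fun m hm => coeff_Sser_eq_zero hm) (by omega)
        (by omega)
    rw [hz, mul_zero]
  · intro hnot
    exact absurd (Finset.HasAntidiagonal.mem_antidiagonal.mpr (by simp)) hnot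

end PMT

/-- For `ν ≥ 1`, the `n`-th Taylor coefficient of `F_ν` at `0` is at least the number
of partitions of `n` into parts at least `2` (the `n`-th Taylor coefficient of `F_1`). -/
theorem partitionsMinTwo_le_taylorCoeff_Fmu (ν : ℝ) (hν : 1 ≤ ν) (n : ℕ) :
    (partitionsMinTwo n : ℝ) ≤ taylorCoeff (Fmu ν) n := by
  have hν0 : (0 : ℝ) ≤ ν := le_trans zero_le_one hν
  have h1 : taylorCoeff (Fmu 1) n = PowerSeries.coeff (R := ℝ) n (PMT.Dser 1) :=
    PMT.taylorCoeff_eq (PMT.rep_Fmu zero_le_one) (PMT.Dser_nn zero_le_one) (by norm_num) n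
  have h2 : taylorCoeff (Fmu ν) n = PowerSeries.coeff (R := ℝ) n (PMT.Dser ν) :=
    PMT.taylorCoeff_eq (PMT.rep_Fmu hν0) (PMT.Dser_nn hν0) (by norm_num) n
  rw [← PMT.taylor_Fmu_one n, h1, h2]
  exact PMT.coeff_Dser_mono hν n
end
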